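/- arXiv:1508.07297 — 7 statements merged into one kernel-verified Lean document; each statement's English description precedes it below -/
import Mathlib

section
/- If A and B are analytic subsets of a Polish group G and both A and B are non-meager in G, then the product set A·B = {a*b : a ∈ A, b ∈ B} has non-empty interior in G. -/
open MeasureTheory Pointwise Set Topology Filter

namespace PiccardPettisAux

variable {α : Type*} [TopologicalSpace α]

/-- The set of points all of whose open neighborhoods meet `S` in a non-meager set. -/
def dD (S : Set α) : Set α := {x | ∀ V : Set α, IsOpen V → x ∈ V → ¬ IsMeagre (S ∩ V)}

lemma isClosed_dD (S : Set α) : IsClosed (dD S) := by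
  rw [← isOpen_compl_iff]
  have h : (dD S)ᶜ = ⋃₀ {V | IsOpen V ∧ IsMeagre (S ∩ V)} := by
    ext x
    simp only [mem_compl_iff, dD, mem_setOf_eq, not_forall, mem_sUnion]
    constructor
    · rintro ⟨V, hV, hxV, hm⟩
      exact ⟨V, ⟨hV, not_not.mp hm⟩, hxV⟩
    · rintro ⟨V, ⟨hV, hm⟩, hxV⟩
      exact ⟨V, hV, hxV, not_not.mpr hm⟩
  rw [h]
  exact isOpen_sUnion fun V hV => hV.1

lemma isMeagre_diff_dD [SecondCountableTopology α] (S : Set α) : IsMeagre (S \ dD S) := by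
  set T : Set (Set α) := {b ∈ TopologicalSpace.countableBasis α | IsMeagre (S ∩ b)} with hT
  have hTc : T.Countable := (TopologicalSpace.countable_countableBasis α).mono (sep_subset _ _)
  have hmeager : IsMeagre (⋃ b ∈ T, S ∩ b) := by
    rw [IsMeagre, compl_iUnion₂]
    exact (countable_bInter_mem hTc).2 fun b hb => hb.2
  refine hmeager.mono fun x hx => ?_
  obtain ⟨hxS, hxD⟩ := hx
  simp only [dD, mem_setOf_eq, not_forall] at hxD
  obtain ⟨V, hV, hxV, hm⟩ := hxD
  rw [not_not] at hm
  obtain ⟨b, hb, hxb, hbV⟩ :=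
    (TopologicalSpace.isBasis_countableBasis α).exists_subset_of_mem_open hxV hV
  exact mem_iUnion₂.mpr ⟨b, ⟨hb, hm.mono (inter_subset_inter_right _ hbV)⟩, hxS, hxb⟩

/-- The Baire hull of a set. -/
def hull (S : Set α) : Set α := dD S ∪ S

lemma subset_hull (S : Set α) : S ⊆ hull S := subset_union_right

lemma baireMeasurableSet_hull [SecondCountableTopology α] (S : Set α) :
    BaireMeasurableSet (hull S) := by
  have h : hull S = dD S ∪ (S \ dD S) := by
    rw [union_diff_self]
    rfl
  rw [h]
  exact (((isClosed_dD S).isOpen_compl.baireMeasurableSet).of_compl).union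
    (isMeagre_diff_dD S).baireMeasurableSet

lemma isMeagre_hull_diff [SecondCountableTopology α] {S Z : Set α}
    (hZ : BaireMeasurableSet Z) (hSZ : S ⊆ Z) : IsMeagre (hull S \ Z) := by
  obtain ⟨W, hWo, hW⟩ := hZ.compl.residualEq_isOpen
  have hres : {x | x ∈ Zᶜ ↔ x ∈ W} ∈ residual α := eventuallyEq_set.1 hW
  have hZcapW : IsMeagre (Z ∩ W) := by
    rw [IsMeagre]
    refine mem_of_superset hres fun x hx hmem => ?_
    exact (hx.mpr hmem.2) hmem.1
  have hZW : IsMeagre (Zᶜ \ W) := by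
    rw [IsMeagre]
    refine mem_of_superset hres fun x hx hmem => ?_
    exact hmem.2 (hx.mp hmem.1)
  have hDW : dD S ∩ W = ∅ := by
    rw [eq_empty_iff_forall_notMem]
    rintro x ⟨hxD, hxW⟩
    exact hxD W hWo hxW (hZcapW.mono (inter_subset_inter_left _ hSZ))
  have hsub : hull S \ Z ⊆ Zᶜ \ W := by
    rintro x ⟨hx, hxZ⟩
    rcases hx with hxD | hxS
    · refine ⟨hxZ, fun hxW => ?_⟩
      rw [eq_empty_iff_forall_notMem] at hDW
      exact hDW x ⟨hxD, hxW⟩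
    · exact (hxZ (hSZ hxS)).elim
  exact hZW.mono hsub

/-! ### List cylinders -/

def cylL (l : List ℕ) : Set (ℕ → ℕ) := {x | ∀ i, (h : i < l.length) → x i = l.get ⟨i, h⟩}

def pre (x : ℕ → ℕ) (n : ℕ) : List ℕ := (List.range n).map x

lemma cylL_pre (x : ℕ → ℕ) (n : ℕ) : cylL (pre x n) = PiNat.cylinder x n := by
  ext y
  simp only [cylL, pre, mem_setOf_eq, PiNat.mem_cylinder_iff, List.length_map, List.length_range,
    List.get_eq_getElem, List.getElem_map, List.getElem_range]

lemma cylL_take_subset (l : List ℕ) (k : ℕ) : cylL l ⊆ cylL (l.take k) := by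
  intro x hx i hi
  have hlen : i < l.length := lt_of_lt_of_le hi (by simp [List.length_take])
  have := hx i hlen
  rw [this]
  simp [List.get_eq_getElem, List.getElem_take]

lemma cylL_append_subset (l : List ℕ) (m : ℕ) : cylL (l ++ [m]) ⊆ cylL l := by
  have h : (l ++ [m]).take l.length = l := by
    rw [List.take_left]
  have := cylL_take_subset (l ++ [m]) l.length
  rwa [h] at this

lemma cylL_eq_iUnion (l : List ℕ) : cylL l = ⋃ m, cylL (l ++ [m]) := by
  apply Subset.antisymm
  · intro x hx
    refine mem_iUnion.mpr ⟨x l.length, fun i hi => ?_⟩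
    rcases Nat.lt_succ_iff_lt_or_eq.mp (by simpa using hi) with h | h
    · rw [hx i h]
      simp [List.get_eq_getElem, List.getElem_append_left h]
    · subst h
      simp [List.get_eq_getElem]
  · exact iUnion_subset fun m => cylL_append_subset l m

/-! ### Analytic sets are Baire measurable -/

theorem analyticSet_baireMeasurableSet {α : Type*} [TopologicalSpace α]
    [PolishSpace α] {A : Set α} (hA : AnalyticSet A) : BaireMeasurableSet A := by
  rw [AnalyticSet] at hA
  rcases hA with rfl | ⟨f, hf, rfl⟩
  · exact IsMeagre.empty.baireMeasurableSet
  letI := TopologicalSpace.upgradeIsCompletelyMetrizable α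
  set AA : List ℕ → Set α := fun l => f '' cylL l with hAA
  set V : List ℕ → Set α := fun l => hull (AA l) ∩ closure (AA l) with hV
  set U : List ℕ → Set α := fun l => ⋂ k, V (l.take k) with hU
  have hVbm : ∀ l, BaireMeasurableSet (V l) := fun l =>
    (baireMeasurableSet_hull _).inter
      ((isClosed_closure.isOpen_compl.baireMeasurableSet).of_compl)
  have hUbm : ∀ l, BaireMeasurableSet (U l) := fun l =>
    BaireMeasurableSet.iInter fun k => hVbm _
  have hAU : ∀ l, AA l ⊆ U l := fun l => subset_iInter fun k =>
    subset_inter ((image_mono (f := f) (cylL_take_subset l k)).trans (subset_hull _))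
      ((image_mono (f := f) (cylL_take_subset l k)).trans subset_closure)
  have hUV : ∀ l, U l ⊆ V l := fun l => by
    have h := iInter_subset (fun k => V (l.take k)) l.length
    rwa [List.take_length] at h
  have hhull : ∀ (l : List ℕ) (Z : Set α), BaireMeasurableSet Z → AA l ⊆ Z →
      IsMeagre (U l \ Z) := fun l Z hZ hAZ =>
    (isMeagre_hull_diff hZ hAZ).mono
      (diff_subset_diff_left ((hUV l).trans inter_subset_left))
  have hUmono : ∀ (l : List ℕ) (m : ℕ), U (l ++ [m]) ⊆ U l := by
    intro l m
    refine subset_iInter fun k => ?_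
    have h1 : (l ++ [m]).take (min k l.length) = l.take k := by
      rw [List.take_append_of_le_length (min_le_right _ _)]
      rw [List.take_eq_take_iff]
      simp [min_assoc]
    have h2 := iInter_subset (fun j => V ((l ++ [m]).take j)) (min k l.length)
    rwa [h1] at h2
  have hM : ∀ l : List ℕ, IsMeagre (U l \ ⋃ m, U (l ++ [m])) := by
    intro l
    refine hhull l _ (BaireMeasurableSet.iUnion fun m => hUbm _) ?_
    have h : AA l = ⋃ m, AA (l ++ [m]) := by
      rw [hAA]
      simp only
      rw [cylL_eq_iUnion l, image_iUnion]
    rw [h]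
    exact iUnion_mono fun m => hAU _
  have hMall : IsMeagre (⋃ l : List ℕ, (U l \ ⋃ m, U (l ++ [m]))) := by
    rw [IsMeagre, compl_iUnion]
    exact countable_iInter_mem.2 fun l => hM l
  have hsub : U [] \ range f ⊆ ⋃ l : List ℕ, (U l \ ⋃ m, U (l ++ [m])) := by
    intro y hy
    by_contra hyM
    simp only [mem_iUnion, mem_diff, not_exists, not_and, not_not] at hyM
    have hyM' : ∀ l, y ∈ U l → ∃ m, y ∈ U (l ++ [m]) := by
      intro l h
      rcases not_forall.1 (hyM l h) with ⟨m, hm⟩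
      exact ⟨m, not_not.1 hm⟩
    choose! g hg using hyM'
    set L : ℕ → List ℕ := fun n => Nat.rec [] (fun _ p => p ++ [g p]) n with hL
    have hyL : ∀ n, y ∈ U (L n) := by
      intro n
      induction n with
      | zero => exact hy.1
      | succ n ih => exact hg (L n) ih
    set x : ℕ → ℕ := fun n => g (L n) with hx
    have hpre : ∀ n, pre x n = L n := by
      intro n
      induction n with
      | zero => rfl
      | succ n ih =>
        show (List.range (n + 1)).map x = L n ++ [g (L n)]
        rw [List.range_succ, List.map_append]
        have h2 : List.map x [n] = [g (L n)] := rfl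
        rw [h2, show List.map x (List.range n) = L n from ih]
    have hyC : ∀ n, y ∈ closure (f '' PiNat.cylinder x n) := by
      intro n
      have h := (hUV _ (hyL n)).2
      rw [← hpre n] at h
      rwa [← cylL_pre x n]
    have hyx : y = f x := by
      have hdist : ∀ ε > (0:ℝ), dist y (f x) ≤ ε := by
        intro ε hε
        have hnb : f ⁻¹' Metric.ball (f x) ε ∈ nhds x :=
          hf.continuousAt.preimage_mem_nhds (Metric.ball_mem_nhds _ hε)
        obtain ⟨t, ⟨z, n, rfl⟩, hxt, hts⟩ :=
          (PiNat.isTopologicalBasis_cylinders _).mem_nhds_iff.1 hnb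
        have hcy : PiNat.cylinder x n = PiNat.cylinder z n :=
          PiNat.mem_cylinder_iff_eq.1 hxt
        have himg : f '' PiNat.cylinder x n ⊆ Metric.closedBall (f x) ε := by
          rw [hcy]
          exact (image_subset_iff.2 hts).trans Metric.ball_subset_closedBall
        have := (closure_minimal himg Metric.isClosed_closedBall) (hyC n)
        exact Metric.mem_closedBall.1 this
      have h0 : dist y (f x) ≤ 0 := by
        by_contra h
        push_neg at h
        have := hdist (dist y (f x) / 2) (by linarith)
        linarith
      exact dist_le_zero.1 h0
    exact hy.2 ⟨x, hyx.symm⟩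
  have hmeagre : IsMeagre (U [] \ range f) := hMall.mono hsub
  have hrU : range f ⊆ U [] := by
    have h : range f = AA [] := by
      rw [hAA]
      simp only
      rw [show cylL [] = univ by ext x; simp [cylL], image_univ]
    rw [h]
    exact hAU []
  have hfin : range f = U [] \ (U [] \ range f) := (diff_diff_cancel_left hrU).symm
  rw [hfin]
  exact (hUbm []).diff hmeagre.baireMeasurableSet

end PiccardPettisAux

open PiccardPettisAux

/-- Piccard–Pettis: if `A` and `B` are analytic non-meager subsets of a Polish group `G`,
then `A * B` has non-empty interior. -/
theorem piccard_pettis_mul {G : Type*} [Group G] [TopologicalSpace G] [IsTopologicalGroup G]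
    [PolishSpace G] {A B : Set G} (hA : AnalyticSet A) (hB : AnalyticSet B)
    (hAnm : ¬ IsMeagre A) (hBnm : ¬ IsMeagre B) :
    (interior (A * B)).Nonempty := by
  have hbaire : BaireSpace G := by
    letI := TopologicalSpace.upgradeIsCompletelyMetrizable G
    infer_instance
  obtain ⟨U, hUo, hAU⟩ := (analyticSet_baireMeasurableSet hA).residualEq_isOpen
  obtain ⟨V, hVo, hBV⟩ := (analyticSet_baireMeasurableSet hB).residualEq_isOpen
  have hAUr : {x | x ∈ A ↔ x ∈ U} ∈ residual G := eventuallyEq_set.1 hAU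
  have hBVr : {x | x ∈ B ↔ x ∈ V} ∈ residual G := eventuallyEq_set.1 hBV
  have hUA : IsMeagre (U \ A) := by
    rw [IsMeagre]
    exact mem_of_superset hAUr fun x hx hmem => hmem.2 (hx.mpr hmem.1)
  have hVB : IsMeagre (V \ B) := by
    rw [IsMeagre]
    exact mem_of_superset hBVr fun x hx hmem => hmem.2 (hx.mpr hmem.1)
  have hAUm : IsMeagre (A \ U) := by
    rw [IsMeagre]
    exact mem_of_superset hAUr fun x hx hmem => hmem.2 (hx.mp hmem.1)
  have hBVm : IsMeagre (B \ V) := by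
    rw [IsMeagre]
    exact mem_of_superset hBVr fun x hx hmem => hmem.2 (hx.mp hmem.1)
  have hUne : U.Nonempty := by
    rcases U.eq_empty_or_nonempty with rfl | h
    · exact absurd (by simpa using hAUm) hAnm
    · exact h
  have hVne : V.Nonempty := by
    rcases V.eq_empty_or_nonempty with rfl | h
    · exact absurd (by simpa using hBVm) hBnm
    · exact h
  have key : U * V ⊆ A * B := by
    rintro g ⟨u, hu, v, hv, rfl⟩
    show u * v ∈ A * B
    by_contra hg
    set φ : G ≃ₜ G := (Homeomorph.inv G).trans (Homeomorph.mulLeft (u * v)) with hφ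
    have hφapp : ∀ z : G, φ z = u * v * z⁻¹ := fun z => rfl
    have hφmeag : IsMeagre (φ '' (V \ B)) := by
      have h : φ '' (V \ B) = φ.symm ⁻¹' (V \ B) := φ.toEquiv.image_eq_preimage_symm _
      rw [h]
      exact hVB.preimage_of_isOpenMap φ.symm.continuous φ.symm.isOpenMap
    set W : Set G := U ∩ φ '' V with hWdef
    have hWo : IsOpen W := hUo.inter (φ.isOpen_image.2 hVo)
    have hWne : W.Nonempty := ⟨u, hu, ⟨v, hv, by rw [hφapp]; group⟩⟩
    have hWsub : W ⊆ (U \ A) ∪ φ '' (V \ B) := by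
      rintro w ⟨hwU, v', hv', rfl⟩
      by_cases hwA : φ v' ∈ A
      · right
        refine ⟨v', ⟨hv', fun hv'B => hg ?_⟩, rfl⟩
        have h : (φ v') * v' = u * v := by rw [hφapp]; group
        rw [← h]
        exact Set.mul_mem_mul hwA hv'B
      · left; exact ⟨hwU, hwA⟩
    have hWm : IsMeagre W := by
      have hun : IsMeagre ((U \ A) ∪ φ '' (V \ B)) := by
        rw [IsMeagre, compl_union]
        exact inter_mem hUA hφmeag
      exact hun.mono hWsub
    have hdense : Dense Wᶜ := dense_of_mem_residual hWm
    obtain ⟨w, hw1, hw2⟩ := hdense.inter_open_nonempty W hWo hWne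
    exact hw2 hw1
  have hopen : IsOpen (U * V) := hVo.mul_left
  obtain ⟨g, hg⟩ : (U * V).Nonempty := hUne.mul hVne
  exact ⟨g, interior_maximal key hopen hg⟩
end

section
/- If A is an analytic subset of a Polish group G and A is non-meager in G, then the set A·A⁻¹ = {a*b⁻¹ : a, b ∈ A} is a neighborhood of the identity element of G. -/
open MeasureTheory Pointwise
open Topology Set Filter

open Topology Set Filter MeasureTheory

section A
variable {α : Type*} [TopologicalSpace α]

lemma isMeagre_sUnion' {S : Set (Set α)} (hc : S.Countable) (h : ∀ s ∈ S, IsMeagre s) :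
    IsMeagre (⋃₀ S) := by
  rw [IsMeagre, Set.compl_sUnion]
  exact (countable_sInter_mem (hc.image _)).2 (by rintro t ⟨s, hs, rfl⟩; exact h s hs)

lemma isMeagre_iUnion'' {ι : Type*} [Countable ι] {s : ι → Set α}
    (h : ∀ i, IsMeagre (s i)) : IsMeagre (⋃ i, s i) := by
  rw [← Set.sUnion_range]
  exact isMeagre_sUnion' (countable_range s) (by rintro _ ⟨i, rfl⟩; exact h i)

def meagerCore (B : Set α) : Set α := {x | ∀ U : Set α, IsOpen U → x ∈ U → ¬ IsMeagre (B ∩ U)}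

lemma isClosed_meagerCore (B : Set α) : IsClosed (meagerCore B) := by
  rw [← isOpen_compl_iff, isOpen_iff_forall_mem_open]
  intro x hx
  simp only [meagerCore, mem_compl_iff, mem_setOf_eq, not_forall] at hx
  obtain ⟨U, hU, hxU, hm⟩ := hx
  exact ⟨U, fun y hy hy' => hy' U hU hy (by simpa using hm), hU, hxU⟩

lemma diff_meagerCore_meagre [SecondCountableTopology α] (B : Set α) :
    IsMeagre (B \ meagerCore B) := by
  obtain ⟨b, hbc, hbb⟩ := TopologicalSpace.exists_countable_basis α
  have hsub : B \ meagerCore B ⊆ ⋃ U ∈ {U ∈ b | IsMeagre (B ∩ U)}, B ∩ U := by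
    intro x ⟨hxB, hx⟩
    simp only [meagerCore, mem_setOf_eq, not_forall] at hx
    obtain ⟨U, hU, hxU, hm⟩ := hx
    have hm' : IsMeagre (B ∩ U) := not_not.1 (by simpa using hm)
    obtain ⟨V, hVb, hxV, hVU⟩ := hbb.2.isOpen_iff.1 hU x hxU
    exact mem_biUnion ⟨hVb, hm'.mono (inter_subset_inter_right _ hVU)⟩ ⟨hxB, hxV⟩
  refine IsMeagre.mono hsub ?_
  rw [← Set.sUnion_image]
  exact isMeagre_sUnion' ((hbc.mono (sep_subset _ _)).image _)
    (by rintro _ ⟨U, ⟨-, hU⟩, rfl⟩; exact hU)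

lemma eqSet.diff_meagre {s t : Set α} (h : s =ᵇ t) : IsMeagre (s \ t) := by
  rw [IsMeagre]
  filter_upwards [Filter.eventuallyEq_set.1 h] with x hx
  simp only [mem_compl_iff, mem_diff, not_and, not_not]
  exact fun hs => hx.1 hs

lemma IsMeagre.union' {s t : Set α} (hs : IsMeagre s) (ht : IsMeagre t) :
    IsMeagre (s ∪ t) := by
  rw [IsMeagre, Set.compl_union]; exact Filter.inter_mem hs ht

def baireHull (B : Set α) : Set α := meagerCore B ∪ B

lemma subset_baireHull (B : Set α) : B ⊆ baireHull B := subset_union_right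

lemma baireMeasurableSet_baireHull [SecondCountableTopology α] (B : Set α) :
    BaireMeasurableSet (baireHull B) := by
  have h : baireHull B = meagerCore B ∪ (B \ meagerCore B) := by
    ext x; simp only [baireHull, mem_union, mem_diff]; tauto
  rw [h]
  exact (BaireMeasurableSet.of_compl
    (isClosed_meagerCore B).isOpen_compl.baireMeasurableSet).union
    (diff_meagerCore_meagre B).baireMeasurableSet

lemma meagre_of_subset_baireHull_diff [BaireSpace α] {B Z : Set α} (hZ : BaireMeasurableSet Z)
    (h : Z ⊆ baireHull B \ B) : IsMeagre Z := by
  by_contra hnm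
  obtain ⟨U, hUo, hZU⟩ := hZ.residualEq_isOpen
  have hZdU : IsMeagre (Z \ U) := eqSet.diff_meagre hZU
  have hUdZ : IsMeagre (U \ Z) := eqSet.diff_meagre hZU.symm
  have hne : (Z ∩ U).Nonempty := by
    rw [Set.nonempty_iff_ne_empty]
    intro he
    rw [Set.eq_empty_iff_forall_notMem] at he
    exact hnm (hZdU.mono (s := Z \ U) (t := Z) fun x hx => ⟨hx, fun hxU => he x ⟨hx, hxU⟩⟩)
  obtain ⟨x, hxZ, hxU⟩ := hne
  have hxcore : x ∈ meagerCore B := by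
    rcases h hxZ with ⟨h1 | h1, h2⟩
    · exact h1
    · exact absurd h1 h2
  exact hxcore U hUo hxU (hUdZ.mono (s := U \ Z) (t := B ∩ U) fun y hy => ⟨hy.2, fun hyZ => (h hyZ).2 hy.1⟩)

def pCyl (n : ℕ) (s : Fin n → ℕ) : Set (ℕ → ℕ) := {x | ∀ i : Fin n, x i.1 = s i}

variable (f : (ℕ → ℕ) → α)

def pFS (n : ℕ) (s : Fin n → ℕ) : Set α := closure (f '' pCyl n s)

def pAS (n : ℕ) (s : Fin n → ℕ) : Set α :=
  ⋃ x ∈ pCyl n s, ⋂ m, pFS f m (fun i : Fin m => x i.1)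

lemma self_mem_pCyl (x : ℕ → ℕ) (n : ℕ) : x ∈ pCyl n (fun i : Fin n => x i.1) :=
  fun _ => rfl

lemma pAS_subset_pFS (n : ℕ) (s : Fin n → ℕ) : pAS f n s ⊆ pFS f n s := by
  intro p hp
  simp only [pAS, mem_iUnion] at hp
  obtain ⟨x, hx, hp⟩ := hp
  have h : (fun i : Fin n => x i.1) = s := funext hx
  have h2 := mem_iInter.1 hp n
  rwa [h] at h2

lemma range_subset_pAS_nil (s : Fin 0 → ℕ) : range f ⊆ pAS f 0 s := by
  rintro - ⟨x, rfl⟩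
  simp only [pAS, mem_iUnion]
  exact ⟨x, fun i => i.elim0, mem_iInter.2 fun m => subset_closure ⟨x, self_mem_pCyl x m, rfl⟩⟩

lemma pAS_eq_iUnion (n : ℕ) (s : Fin n → ℕ) :
    pAS f n s = ⋃ k, pAS f (n + 1) (Fin.snoc s k) := by
  ext p
  simp only [pAS, mem_iUnion]
  constructor
  · rintro ⟨x, hx, hp⟩
    refine ⟨x n, x, fun i => ?_, hp⟩
    refine Fin.lastCases ?_ (fun j => ?_) i
    · simp [Fin.snoc_last]
    · simpa [Fin.snoc_castSucc] using hx j
  · rintro ⟨k, x, hx, hp⟩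
    exact ⟨x, fun i => by simpa [Fin.snoc_castSucc] using hx i.castSucc, hp⟩

lemma eq_of_mem_iInter_pFS {α : Type*} [MetricSpace α] {f : (ℕ → ℕ) → α} (hf : Continuous f)
    {x : ℕ → ℕ} {p : α} (hp : ∀ m, p ∈ pFS f m (fun i : Fin m => x i.1)) : p = f x := by
  have h : ∀ m : ℕ, ∃ z ∈ pCyl m (fun i : Fin m => x i.1), dist p (f z) < 1 / (m + 1) := by
    intro m
    obtain ⟨b, ⟨z, hz, rfl⟩, hb⟩ := (Metric.mem_closure_iff.1 (hp m)) (1 / (m + 1)) (by positivity)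
    exact ⟨z, hz, hb⟩
  choose z hz hdist using h
  have hzx : Tendsto z atTop (nhds x) := by
    rw [tendsto_pi_nhds]
    intro i
    refine tendsto_const_nhds.congr' ?_
    filter_upwards [eventually_gt_atTop i] with m him
    exact (hz m ⟨i, him⟩).symm
  have h1 : Tendsto (fun m => f (z m)) atTop (nhds (f x)) := (hf.tendsto x).comp hzx
  have h2 : Tendsto (fun m => f (z m)) atTop (nhds p) := by
    rw [tendsto_iff_dist_tendsto_zero]
    refine squeeze_zero (fun m => dist_nonneg) (fun m => (dist_comm p (f (z m)) ▸ hdist m).le) ?_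
    exact tendsto_one_div_add_atTop_nhds_zero_nat
  exact tendsto_nhds_unique h2 h1

end A

theorem analyticSet_baireMeasurableSet {α : Type*} [TopologicalSpace α] [PolishSpace α]
    {A : Set α} (hA : AnalyticSet A) : BaireMeasurableSet A := by
  letI := TopologicalSpace.upgradeIsCompletelyMetrizable α
  rw [AnalyticSet] at hA
  rcases hA with rfl | ⟨f, hf, rfl⟩
  · exact IsMeagre.empty.baireMeasurableSet
  set H : ∀ n : ℕ, (Fin n → ℕ) → Set α := fun n s => baireHull (pAS f n s) ∩ pFS f n s with hH
  have hHBM : ∀ n s, BaireMeasurableSet (H n s) := fun n s =>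
    (baireMeasurableSet_baireHull _).inter
      (BaireMeasurableSet.of_compl isClosed_closure.isOpen_compl.baireMeasurableSet)
  have hASH : ∀ n s, pAS f n s ⊆ H n s := fun n s =>
    subset_inter (subset_baireHull _) (pAS_subset_pFS f n s)
  set M : Set α :=
    ⋃ q : Σ n : ℕ, Fin n → ℕ, (H q.1 q.2 \ ⋃ k, H (q.1 + 1) (Fin.snoc q.2 k)) with hM
  have hMm : IsMeagre M := by
    refine isMeagre_iUnion'' fun q => ?_
    refine meagre_of_subset_baireHull_diff (B := pAS f q.1 q.2)
      ((hHBM _ _).diff (BaireMeasurableSet.iUnion fun k => hHBM _ _)) ?_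
    rintro p ⟨⟨hp1, -⟩, hp2⟩
    refine ⟨hp1, fun hpAS => hp2 ?_⟩
    rw [pAS_eq_iUnion] at hpAS
    obtain ⟨k, hk⟩ := mem_iUnion.1 hpAS
    exact mem_iUnion.2 ⟨k, hASH _ _ hk⟩
  have hAH : range f ⊆ H 0 (fun i => i.elim0) := fun p hp =>
    hASH 0 _ (range_subset_pAS_nil f _ hp)
  have key : H 0 (fun i => i.elim0) \ M ⊆ range f := by
    rintro p ⟨hp0, hpM⟩
    have hstep : ∀ n (s : Fin n → ℕ), p ∈ H n s → ∃ k, p ∈ H (n + 1) (Fin.snoc s k) := by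
      intro n s hps
      by_contra hc
      push_neg at hc
      refine hpM (mem_iUnion.2 ⟨⟨n, s⟩, hps, fun hmem => ?_⟩)
      obtain ⟨k, hk⟩ := mem_iUnion.1 hmem
      exact hc k hk
    choose g hg using hstep
    let seq : (n : ℕ) → {s : Fin n → ℕ // p ∈ H n s} := fun n =>
      Nat.rec ⟨fun i => i.elim0, hp0⟩
        (fun m prev => ⟨Fin.snoc prev.1 (g m prev.1 prev.2), hg m prev.1 prev.2⟩) n
    set x : ℕ → ℕ := fun n => g n (seq n).1 (seq n).2 with hx
    have hsucc : ∀ m, (seq (m + 1)).1 = Fin.snoc (seq m).1 (x m) := fun m => rfl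
    have hseqx : ∀ n, (seq n).1 = fun i : Fin n => x i.1 := by
      intro n
      induction n with
      | zero => funext i; exact i.elim0
      | succ m ih =>
        funext i
        rw [hsucc m]
        refine Fin.lastCases ?_ (fun j => ?_) i
        · rw [Fin.snoc_last]; rfl
        · rw [Fin.snoc_castSucc]
          exact congrFun ih j
    have hpiF : ∀ n, p ∈ pFS f n (fun i : Fin n => x i.1) := by
      intro n
      have h3 : p ∈ pFS f n ((seq n).1) := (seq n).2.2
      rw [hseqx n] at h3
      exact h3
    exact ⟨x, (eq_of_mem_iInter_pFS hf hpiF).symm⟩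
  have hdiff : H 0 (fun i => i.elim0) \ range f ⊆ M := by
    rintro p ⟨hp1, hp2⟩
    by_contra hpM
    exact hp2 (key ⟨hp1, hpM⟩)
  rw [← Set.diff_diff_cancel_left hAH]
  exact (hHBM 0 _).diff ((hMm.mono hdiff).baireMeasurableSet)

theorem pettis {G : Type*} [Group G] [TopologicalSpace G] [IsTopologicalGroup G]
    [PolishSpace G] {A : Set G} (hA : BaireMeasurableSet A) (hAnm : ¬ IsMeagre A) :
    A * A⁻¹ ∈ nhds (1 : G) := by
  letI := TopologicalSpace.upgradeIsCompletelyMetrizable G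
  obtain ⟨U, hUo, hAU⟩ := hA.residualEq_isOpen
  have hAdU : IsMeagre (A \ U) := eqSet.diff_meagre hAU
  have hUdA : IsMeagre (U \ A) := eqSet.diff_meagre hAU.symm
  have hUne : U.Nonempty := by
    rcases U.eq_empty_or_nonempty with rfl | h
    · exact absurd (hAdU.mono (by simp)) hAnm
    · exact h
  have hopen : IsOpen (U * U⁻¹) := hUo.mul_right
  have h1 : (1 : G) ∈ U * U⁻¹ := by
    obtain ⟨u, hu⟩ := hUne
    exact ⟨u, hu, u⁻¹, Set.inv_mem_inv.2 hu, mul_inv_cancel u⟩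
  have hsub : U * U⁻¹ ⊆ A * A⁻¹ := by
    intro g hg
    obtain ⟨a, ha, b, hb, hab⟩ := hg
    -- g • U ∩ U is nonempty open, hence nonmeager
    have hne : ((g • U) ∩ U).Nonempty := by
      refine ⟨a, ?_, ha⟩
      rw [Set.mem_smul_set]
      exact ⟨b⁻¹, Set.mem_inv.1 hb, by simp only [smul_eq_mul, ← hab]; group⟩
    have hio : IsOpen ((g • U) ∩ U) := (hUo.smul g).inter hUo
    have hnm : ¬ IsMeagre ((g • U) ∩ U) := by
      intro hm
      have hd : Dense ((g • U ∩ U)ᶜ) := dense_of_mem_residual hm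
      obtain ⟨z, hz1, hz2⟩ := hd.exists_mem_open hio hne
      exact hz1 hz2
    -- g • (U \ A) is meager
    have hsm : IsMeagre (g • (U \ A)) := by
      have : g • (U \ A) = (fun x => g⁻¹ * x) ⁻¹' (U \ A) := by
        ext x
        rw [Set.mem_smul_set_iff_inv_smul_mem, Set.mem_preimage, smul_eq_mul]
      rw [this]
      exact hUdA.preimage_of_isOpenMap (continuous_const.mul continuous_id)
        (isOpenMap_mul_left g⁻¹)
    have hkey : ¬ IsMeagre ((g • A) ∩ A) := by
      intro hm
      apply hnm
      have hsub2 : (g • U) ∩ U ⊆ ((g • A) ∩ A) ∪ (g • (U \ A) ∪ (U \ A)) := by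
        rintro x ⟨hx1, hx2⟩
        by_cases hxA : x ∈ A
        · by_cases hxgA : x ∈ g • A
          · exact Or.inl ⟨hxgA, hxA⟩
          · refine Or.inr (Or.inl ?_)
            obtain ⟨u, hu, rfl⟩ := hx1
            exact ⟨u, ⟨hu, fun huA => hxgA ⟨u, huA, rfl⟩⟩, rfl⟩
        · exact Or.inr (Or.inr ⟨hx2, hxA⟩)
      exact (hm.union' (hsm.union' hUdA)).mono hsub2
    have hne2 : ((g • A) ∩ A).Nonempty := by
      rw [Set.nonempty_iff_ne_empty]
      intro h
      exact hkey (h ▸ IsMeagre.empty)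
    obtain ⟨y, hy1, hy2⟩ := hne2
    obtain ⟨c, hc, rfl⟩ := hy1
    exact ⟨g * c, hy2, c⁻¹, Set.inv_mem_inv.2 hc, by group⟩
  exact Filter.mem_of_superset (hopen.mem_nhds h1) hsub

/-- Piccard–Pettis: if `A` is an analytic non-meager subset of a Polish group `G`,
then `A * A⁻¹` is a neighborhood of the identity. -/
theorem piccard_pettis_mul_inv {G : Type*} [Group G] [TopologicalSpace G] [IsTopologicalGroup G]
    [PolishSpace G] {A : Set G} (hA : AnalyticSet A) (hAnm : ¬ IsMeagre A) :
    A * A⁻¹ ∈ nhds (1 : G) := by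
  exact pettis (analyticSet_baireMeasurableSet hA) hAnm
end

section
/- Let G be a topological group with Raikov completion Ḡ, and let D be an n-dense subset of G. If A ⊆ G is closed and the set D·cl_Ḡ(A) has empty interior in Ḡ, then A is a Z_n-set in G. -/
open Pointwise Topology
/-- A set `B ⊆ X` is `n`-dense if the continuous maps `[0,1]ⁿ → X` with range in `B`
are dense in `C([0,1]ⁿ, X)` with the compact-open topology. -/
def IsNDense {X : Type*} [TopologicalSpace X] (n : ℕ) (B : Set X) : Prop :=
  Dense {f : C(Fin n → unitInterval, X) | Set.range f ⊆ B}

/-- A set `A ⊆ X` is a `Z_n`-set if it is closed and its complement is `n`-dense. -/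
def IsZSet {X : Type*} [TopologicalSpace X] (n : ℕ) (A : Set X) : Prop :=
  IsClosed A ∧ IsNDense n Aᶜ

/-- If `D` is `n`-dense in a topological group `G`, `A ⊆ G` is closed and the set
`D · cl(A)` has empty interior in the Raikov completion `Ḡ` of `G`
(modelled as a complete topological group containing `G` as a dense subgroup via an
embedding `e`), then `A` is a `Z_n`-set in `G`. -/
theorem isZSet_of_empty_interior_mul_closure {G GBar : Type*}
    [Group G] [TopologicalSpace G] [IsTopologicalGroup G]
    [Group GBar] [UniformSpace GBar] [IsUniformGroup GBar] [CompleteSpace GBar]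
    (e : G →* GBar) (he : IsEmbedding e) (hdense : DenseRange e)
    {D A : Set G} (n : ℕ) (hD : IsNDense n D) (hA : IsClosed A)
    (hint : interior ((e '' D) * closure (e '' A)) = ∅) :
    IsZSet n A := by
  refine ⟨hA, ?_⟩
  have key : ∀ K : Set G, IsCompact K → K ⊆ D → ∀ V ∈ 𝓝 (1 : G), ¬ V ⊆ K * A := by
    intro K hK hKD V hV hVKA
    rw [he.toIsInducing.nhds_eq_comap, Filter.mem_comap] at hV
    obtain ⟨W, hW, hWV⟩ := hV
    obtain ⟨W', hW'sub, hW'open, hW'mem⟩ := mem_nhds_iff.mp hW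
    have h1 : W' ∩ Set.range e ⊆ (e '' K) * closure (e '' A) := by
      rintro x ⟨hxW, c, rfl⟩
      have hcV : c ∈ V := hWV (hW'sub hxW)
      obtain ⟨k, hk, a, ha, rfl⟩ := hVKA hcV
      exact ⟨e k, Set.mem_image_of_mem e hk, e a,
        subset_closure (Set.mem_image_of_mem e ha), (map_mul e k a).symm⟩
    have hclosed : IsClosed ((e '' K) * closure (e '' A)) :=
      isClosed_closure.mul_left_of_isCompact (hK.image he.continuous)
    have h2 : W' ⊆ (e '' K) * closure (e '' A) := by
      calc W' ⊆ closure (W' ∩ Set.range e) := hdense.open_subset_closure_inter hW'open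
        _ ⊆ closure ((e '' K) * closure (e '' A)) := closure_mono h1
        _ = _ := hclosed.closure_eq
    have h3 : W' ⊆ interior ((e '' D) * closure (e '' A)) :=
      interior_maximal (h2.trans (Set.mul_subset_mul_right (Set.image_mono hKD))) hW'open
    rw [hint] at h3
    exact h3 hW'mem
  set S : Set C(Fin n → unitInterval, G) := {f | Set.range f ⊆ Aᶜ} with hS
  have step2 : ∀ h : C(Fin n → unitInterval, G), (∀ x, (h x)⁻¹ ∈ D) → h ∈ closure S := by
    intro h hh
    rw [mem_closure_iff_nhds]
    intro N hN
    have hψ : Continuous fun c : G => h * ContinuousMap.const _ c :=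
      continuous_const.mul ContinuousMap.continuous_const'
    have h1 : h * ContinuousMap.const _ (1 : G) = h := by ext x; simp
    have hV : (fun c : G => h * ContinuousMap.const _ c) ⁻¹' N ∈ 𝓝 (1 : G) := by
      apply hψ.continuousAt.preimage_mem_nhds
      rwa [h1]
    set K : Set G := (Set.range h)⁻¹ with hKdef
    have hK : IsCompact K := (isCompact_range h.continuous).inv
    have hKD : K ⊆ D := by
      intro x hx
      obtain ⟨y, hy⟩ := Set.mem_inv.mp hx
      have := hh y
      rw [hy] at this
      simpa using this
    obtain ⟨c, hcV, hc⟩ :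
        ∃ c ∈ (fun c : G => h * ContinuousMap.const _ c) ⁻¹' N, c ∉ K * A := by
      by_contra hcon
      push_neg at hcon
      exact key K hK hKD _ hV hcon
    refine ⟨h * ContinuousMap.const _ c, hcV, ?_⟩
    rintro y ⟨x, rfl⟩ hyA
    exact hc ⟨(h x)⁻¹, Set.inv_mem_inv.mpr (Set.mem_range_self x), h x * c, hyA, by group⟩
  intro f
  have hinv : Continuous fun g : C(Fin n → unitInterval, G) => g⁻¹ := by
    have h2 : (fun g : C(Fin n → unitInterval, G) => g⁻¹) =
        fun g => (⟨Inv.inv, continuous_inv⟩ : C(G, G)).comp g := by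
      funext g; ext x; rfl
    rw [h2]
    exact ContinuousMap.continuous_postcomp _
  have hf : f⁻¹ ∈ closure {g : C(Fin n → unitInterval, G) | Set.range g ⊆ D} := hD f⁻¹
  have : f ∈ closure ((fun g : C(Fin n → unitInterval, G) => g⁻¹) ''
      {g : C(Fin n → unitInterval, G) | Set.range g ⊆ D}) := by
    have := image_closure_subset_closure_image hinv (Set.mem_image_of_mem _ hf)
    simpa using this
  refine closure_minimal ?_ isClosed_closure this
  rintro h' ⟨g, hg, rfl⟩
  exact step2 g⁻¹ (fun x => by simpa using hg (Set.mem_range_self x))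
end

section
/- Let G be a separable metrizable topological group and A ⊆ G closed. If there exists a σ-compact dense subset D ⊆ G such that for every compact K ⊆ D the set K·A is nowhere dense in G, then the closure of A in the Raikov completion Ḡ, multiplied by D, has empty interior in Ḡ. -/
open Pointwise Topology

section Aux

open Filter Set

/-- Nowhere density transfers along a dense embedding. -/
lemma aux_nowhereDense_image {G H : Type*} [TopologicalSpace G] [TopologicalSpace H]
    {e : G → H} (he : IsEmbedding e) (hdense : DenseRange e) {S : Set G}
    (hS : IsNowhereDense S) : IsNowhereDense (e '' S) := by
  rw [IsNowhereDense, eq_empty_iff_forall_notMem]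
  intro x hx
  set U := interior (closure (e '' S)) with hU
  have hUopen : IsOpen U := isOpen_interior
  have hsub : e ⁻¹' U ⊆ closure S := by
    intro y hy
    rw [hU] at hy
    rw [he.closure_eq_preimage_closure_image S]
    show e y ∈ closure (e '' S)
    exact interior_subset hy
  have hpre : e ⁻¹' U ⊆ interior (closure S) :=
    interior_maximal hsub (hUopen.preimage he.continuous)
  have hpre_empty : e ⁻¹' U = ∅ := by
    rw [IsNowhereDense] at hS
    rw [← Set.subset_empty_iff, ← hS]
    exact hpre
  -- U is open, nonempty, and misses the dense range of e: contradiction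
  have : (U ∩ Set.range e).Nonempty := hdense.inter_open_nonempty U hUopen ⟨x, hx⟩
  obtain ⟨z, hzU, g, rfl⟩ := this
  have : g ∈ e ⁻¹' U := hzU
  rw [hpre_empty] at this
  exact this

/-- The neighborhood filter at 1 of a group with a dense embedded copy of a first countable
group is countably generated. -/
lemma aux_nhds_one_countablyGenerated {G GBar : Type*}
    [Group G] [TopologicalSpace G] [IsTopologicalGroup G]
    [FirstCountableTopology G]
    [Group GBar] [TopologicalSpace GBar] [IsTopologicalGroup GBar]
    (e : G →* GBar) (he : IsEmbedding e) (hdense : DenseRange e) :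
    (𝓝 (1 : GBar)).IsCountablyGenerated := by
  obtain ⟨V, hV⟩ := (𝓝 (1 : G)).exists_antitone_basis
  have hbasis : (𝓝 (1 : GBar)).HasBasis (fun _ : ℕ => True)
      (fun n => closure (e '' V n)) := by
    constructor
    intro W
    constructor
    · intro hW
      obtain ⟨C, hC_mem, hC_closed, hC_sub⟩ := exists_mem_nhds_isClosed_subset hW
      have hint : interior C ∈ 𝓝 (1 : GBar) := (isOpen_interior.mem_nhds_iff).mpr
        (mem_interior_iff_mem_nhds.mpr hC_mem)
      have hpre : e ⁻¹' interior C ∈ 𝓝 (1 : G) := by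
        have h := he.continuous.tendsto (1 : G)
        rw [map_one e] at h
        exact h hint
      obtain ⟨n, hn⟩ := hV.toHasBasis.mem_iff.mp hpre
      refine ⟨n, trivial, ?_⟩
      calc closure (e '' V n) ⊆ closure (interior C) := by
            apply closure_mono
            intro z hz
            obtain ⟨g, hg, rfl⟩ := hz
            exact hn.2 hg
        _ ⊆ C := closure_minimal interior_subset hC_closed
        _ ⊆ W := hC_sub
    · rintro ⟨n, -, hn⟩
      apply Filter.mem_of_superset _ hn
      -- closure (e '' V n) is a neighborhood of 1
      have hVn : V n ∈ 𝓝 (1 : G) := hV.toHasBasis.mem_of_mem trivial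
      rw [he.nhds_eq_comap, map_one e] at hVn
      obtain ⟨U, hU_mem, hU_sub⟩ := hVn
      obtain ⟨U', hU'_sub, hU'_open, hU'_mem⟩ := mem_nhds_iff.mp hU_mem
      apply Filter.mem_of_superset (hU'_open.mem_nhds hU'_mem)
      calc U' ⊆ closure (U' ∩ Set.range e) := hdense.open_subset_closure_inter hU'_open
        _ ⊆ closure (e '' V n) := by
            apply closure_mono
            rintro z ⟨hz, g, rfl⟩
            exact ⟨g, hU_sub (hU'_sub hz), rfl⟩
  exact hbasis.isCountablyGenerated

end Aux

/-- If `G` is a separable metrizable topological group, `A ⊆ G` is closed and `D ⊆ G` is a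
σ-compact dense set such that `K · A` is nowhere dense in `G` for every compact `K ⊆ D`,
then `D · cl(A)` has empty interior in the Raikov completion `Ḡ` of `G`
(modelled as a complete topological group containing `G` as a dense subgroup via an
embedding `e`). -/
theorem empty_interior_mul_closure_of_nowhereDense {G GBar : Type*}
    [Group G] [TopologicalSpace G] [IsTopologicalGroup G]
    [TopologicalSpace.SeparableSpace G] [TopologicalSpace.MetrizableSpace G]
    [Group GBar] [UniformSpace GBar] [IsUniformGroup GBar] [CompleteSpace GBar]
    (e : G →* GBar) (he : IsEmbedding e) (hdense : DenseRange e)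
    {D A : Set G} (hA : IsClosed A) (hDsc : IsSigmaCompact D) (hDd : Dense D)
    (hKA : ∀ K ⊆ D, IsCompact K → IsNowhereDense (K * A)) :
    interior ((e '' D) * closure (e '' A)) = ∅ := by
  classical
  -- GBar is a Baire space
  haveI hng : (𝓝 (1 : GBar)).IsCountablyGenerated :=
    aux_nhds_one_countablyGenerated e he hdense
  haveI hucg : (uniformity GBar).IsCountablyGenerated := by
    rw [uniformity_eq_comap_nhds_one GBar]
    infer_instance
  haveI : BaireSpace GBar := by
    letI : PseudoMetricSpace GBar := UniformSpace.pseudoMetricSpace GBar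
    infer_instance
  -- decompose D into compacts
  obtain ⟨K, hKc, hKU⟩ := hDsc
  have hKsub : ∀ n, K n ⊆ D := fun n => hKU ▸ Set.subset_iUnion K n
  -- each piece is closed with empty interior
  set C : ℕ → Set GBar := fun n => e '' K n * closure (e '' A) with hC
  have hC_closed : ∀ n, IsClosed (C n) :=
    fun n => IsClosed.mul_left_of_isCompact isClosed_closure
      ((hKc n).image he.continuous)
  have hC_nd : ∀ n, interior (C n) = ∅ := by
    intro n
    have hnd : IsNowhereDense (e '' (K n * A)) :=
      aux_nowhereDense_image he hdense (hKA (K n) (hKsub n) (hKc n))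
    have hsub : C n ⊆ closure (e '' (K n * A)) := by
      rw [hC]
      have h1 : e '' K n * closure (e '' A) ⊆ closure (e '' K n) * closure (e '' A) :=
        Set.mul_subset_mul_right subset_closure
      refine h1.trans ?_
      have h2 : closure (e '' K n) * closure (e '' A) ⊆ closure (e '' K n * e '' A) := by
        rw [← Set.image_mul_prod, ← Set.image_mul_prod, ← closure_prod_eq]
        exact image_closure_subset_closure_image continuous_mul
      rw [Set.image_mul] ; exact h2
    rw [← Set.subset_empty_iff]
    calc interior (C n) ⊆ interior (closure (e '' (K n * A))) :=
          interior_mono hsub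
      _ = ∅ := hnd
  -- the union
  have hunion : (e '' D) * closure (e '' A) = ⋃ n, C n := by
    rw [← hKU, Set.image_iUnion, Set.iUnion_mul]
  rw [hunion, interior_eq_empty_iff_dense_compl, Set.compl_iUnion]
  exact dense_iInter_of_isOpen (fun n => (hC_closed n).isOpen_compl)
    (fun n => by
      rw [← interior_eq_empty_iff_dense_compl]
      exact hC_nd n)
end

section
/- Let C be a convex subset of a separable topological vector space X over ℝ with metrizable topology. If there exists a countable set S ⊆ X such that S + C is 1-dense in X (i.e., the set of paths [0,1] → S + C is dense in C([0,1], X)), then the closure of the linear span of C − C is all of X. -/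
open Pointwise Topology
/-- If `C` is a convex subset of a separable metrizable real topological vector space `X`
and `S + C` is `1`-dense in `X` for some countable `S`, then the closed linear span of
`C - C` is all of `X`. -/
theorem closure_span_sub_eq_univ {X : Type*} [AddCommGroup X] [Module ℝ X]
    [TopologicalSpace X] [IsTopologicalAddGroup X] [ContinuousSMul ℝ X]
    [TopologicalSpace.SeparableSpace X] [TopologicalSpace.MetrizableSpace X]
    {C : Set X} (hC : Convex ℝ C) {S : Set X} (hS : S.Countable)
    (h1 : IsNDense 1 (S + C)) :
    closure (Submodule.span ℝ (C - C) : Set X) = Set.univ := by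
  classical
  -- C is nonempty
  have hCne : C.Nonempty := by
    by_contra hne
    rw [Set.not_nonempty_iff_eq_empty] at hne
    have : ({f : C(Fin 1 → unitInterval, X) | Set.range f ⊆ S + C} : Set _).Nonempty := by
      haveI : Nonempty (C(Fin 1 → unitInterval, X)) := ⟨ContinuousMap.const _ 0⟩
      exact h1.nonempty
    obtain ⟨f, hf⟩ := this
    have : Set.range f = ∅ := Set.subset_empty_iff.mp (by simpa [hne] using hf)
    exact (Set.range_nonempty f).ne_empty this
  obtain ⟨c₀, hc₀⟩ := hCne
  set V : Submodule ℝ X := (Submodule.span ℝ (C - C)).topologicalClosure with hV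
  have hVc : (V : Set X) = closure (Submodule.span ℝ (C - C) : Set X) := rfl
  rw [← hVc, Set.eq_univ_iff_forall]
  intro x
  by_contra hx
  haveI hVclosed : IsClosed (V : Set X) :=
    (Submodule.span ℝ (C - C)).isClosed_topologicalClosure
  -- C - C ⊆ V
  have hCC : ∀ c ∈ C, c - c₀ ∈ V := fun c hc =>
    (Submodule.span ℝ (C - C)).le_topologicalClosure
      (Submodule.subset_span (Set.sub_mem_sub hc hc₀))
  -- choose open sets W1 ∋ x, W0 ∋ 0 with W1 - W0 disjoint from V
  have hsub : ∀ᶠ p : X × X in nhds (x, 0), p.1 - p.2 ∈ (V : Set X)ᶜ := by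
    have hcont : Continuous fun p : X × X => p.1 - p.2 := continuous_fst.sub continuous_snd
    have : (V : Set X)ᶜ ∈ nhds (x - 0) := hVclosed.isOpen_compl.mem_nhds (by simpa using hx)
    exact hcont.continuousAt.preimage_mem_nhds (by simpa using this)
  rw [Filter.eventually_iff, nhds_prod_eq, Filter.mem_prod_iff] at hsub
  obtain ⟨W1, hW1, W0, hW0, hW⟩ := hsub
  -- the open set N in C([0,1], X)
  let u0 : Fin 1 → unitInterval := fun _ => 0
  let u1 : Fin 1 → unitInterval := fun _ => 1
  let N : Set C(Fin 1 → unitInterval, X) :=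
    {g | g u1 ∈ interior W1} ∩ {g | g u0 ∈ interior W0}
  have hNopen : IsOpen N :=
    ((isOpen_interior.preimage (continuous_eval_const u1)).inter
      (isOpen_interior.preimage (continuous_eval_const u0)))
  have hNne : N.Nonempty := by
    refine ⟨⟨fun u => ((u 0 : ℝ)) • x, ?_⟩, ?_, ?_⟩
    · exact (continuous_subtype_val.comp (continuous_apply 0)).smul continuous_const
    · simpa [u1] using mem_interior_iff_mem_nhds.mpr hW1
    · simpa [u0] using mem_interior_iff_mem_nhds.mpr hW0
  obtain ⟨g, hgS, hgN⟩ := h1.exists_mem_open hNopen hNne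
  -- g u1 - g u0 ∉ V
  have hgV : g u1 - g u0 ∉ (V : Set X) := by
    have hp : (g u1, g u0) ∈ W1 ×ˢ W0 :=
      Set.mem_prod.mpr ⟨interior_subset hgN.1, interior_subset hgN.2⟩
    exact hW hp
  -- quotient setup
  letI := TopologicalSpace.metrizableSpaceMetric X
  haveI : SecondCountableTopology X := UniformSpace.secondCountable_of_separable X
  haveI : SecondCountableTopology (X ⧸ V) :=
    inferInstanceAs (SecondCountableTopology (X ⧸ V.toAddSubgroup))
  letI : PseudoMetricSpace (X ⧸ V) :=
    TopologicalSpace.pseudoMetrizableSpacePseudoMetric (X ⧸ V)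
  have hπ : Continuous V.mkQ := V.isOpenQuotientMap_mkQ.continuous
  -- range of π ∘ g is countable
  set T : Set (X ⧸ V) := (fun s => V.mkQ s + V.mkQ c₀) '' S with hT
  have hTcnt : T.Countable := hS.image _
  have hrange : Set.range (V.mkQ ∘ g) ⊆ T := by
    rintro _ ⟨u, rfl⟩
    obtain ⟨s, hs, c, hc, hsc⟩ := hgS (Set.mem_range_self u)
    refine ⟨s, hs, ?_⟩
    have : V.mkQ c = V.mkQ c₀ := (Submodule.Quotient.eq V).mpr (hCC c hc)
    simp only [Function.comp_apply, ← hsc, map_add, this]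
  -- range is preconnected
  have hconn : IsPreconnected (Set.range (V.mkQ ∘ g)) :=
    isPreconnected_range (hπ.comp g.continuous)
  -- a ≠ b
  set a := V.mkQ (g u0) with ha
  set b := V.mkQ (g u1) with hb
  have hab : a ≠ b := by
    intro h
    apply hgV
    have : V.mkQ (g u1 - g u0) = 0 := by
      rw [map_sub, ← ha, ← hb, h, sub_self]
    exact (Submodule.Quotient.mk_eq_zero V).mp this
  have hdist : 0 < dist a b := by
    rcases lt_or_eq_of_le (dist_nonneg : (0:ℝ) ≤ dist a b) with h | h
    · exact h
    · exact absurd (Metric.inseparable_iff.mpr h.symm).eq hab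
  -- intermediate value contradiction
  have hmem_a : a ∈ Set.range (V.mkQ ∘ g) := ⟨u0, rfl⟩
  have hmem_b : b ∈ Set.range (V.mkQ ∘ g) := ⟨u1, rfl⟩
  have himg : IsPreconnected ((fun q => dist a q) '' Set.range (V.mkQ ∘ g)) :=
    hconn.image _ (by
      have hd : Continuous fun q : X ⧸ V => dist a q := continuous_const.dist continuous_id
      exact hd.continuousOn)
  have hIcc : Set.Icc (0 : ℝ) (dist a b) ⊆ (fun q => dist a q) '' Set.range (V.mkQ ∘ g) :=
    himg.Icc_subset ⟨a, hmem_a, dist_self a⟩ ⟨b, hmem_b, rfl⟩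
  have hcnt : (Set.Icc (0 : ℝ) (dist a b)).Countable :=
    ((hTcnt.mono hrange).image _).mono hIcc
  have := hcnt.le_aleph0
  rw [Cardinal.mk_Icc_real hdist] at this
  exact Cardinal.aleph0_lt_continuum.not_ge this
end

section
/- Let A ⊆ B be convex sets in a metrizable topological vector space X over ℝ, with A dense in B. Then for every n, every continuous map f : [0,1]^n → B, and every neighborhood U of 0 in X, there exists a continuous map g : [0,1]^n → A such that g(z) ∈ f(z) + U for all z ∈ [0,1]^n. -/
open Filter Topology Finset
open scoped Uniformity

lemma sum_mem_of_small {X : Type*} [AddCommGroup X] [TopologicalSpace X]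
    [IsTopologicalAddGroup X] : ∀ (m : ℕ) (U : Set X), U ∈ 𝓝 (0 : X) →
    ∃ W ∈ 𝓝 (0 : X),
      ∀ {ι : Type} [DecidableEq ι] (s : Finset ι) (x : ι → X), s.card ≤ m →
        (∀ i ∈ s, x i ∈ W) → ∑ i ∈ s, x i ∈ U := by
  intro m
  induction m with
  | zero =>
    intro U hU
    refine ⟨U, hU, fun s x hc _ => ?_⟩
    have : s = ∅ := Finset.card_eq_zero.mp (Nat.le_zero.mp hc)
    simpa [this] using mem_of_mem_nhds hU
  | succ m ih =>
    intro U hU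
    obtain ⟨V, hV, hVadd⟩ := exists_nhds_zero_half hU
    obtain ⟨W, hW, hWsum⟩ := ih V hV
    refine ⟨W ∩ V, Filter.inter_mem hW hV, fun s x hc hx => ?_⟩
    rcases s.eq_empty_or_nonempty with rfl | ⟨i, hi⟩
    · simpa using mem_of_mem_nhds hU
    · rw [← Finset.add_sum_erase _ _ hi]
      refine hVadd _ (hx i hi).2 _ (hWsum _ _ ?_ fun j hj => (hx j (Finset.mem_of_mem_erase hj)).1)
      have := Finset.card_erase_of_mem hi
      omega

lemma hat_zero_of_far {N : ℕ} {c : ℝ} (h0 : 0 ≤ c) (j : Fin (N + 1))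
    (hj1 : j.val ≠ ⌊c⌋₊) (hj2 : j.val ≠ ⌊c⌋₊ + 1) :
    max 0 (1 - |c - (j.val : ℝ)|) = 0 := by
  have hm_le : (⌊c⌋₊ : ℝ) ≤ c := Nat.floor_le h0
  have hm_lt : c < ⌊c⌋₊ + 1 := Nat.lt_floor_add_one c
  have habs : (1 : ℝ) ≤ |c - (j.val : ℝ)| := by
    rcases (by omega : j.val + 1 ≤ ⌊c⌋₊ ∨ ⌊c⌋₊ + 2 ≤ j.val) with h | h
    · have : (j.val : ℝ) + 1 ≤ ⌊c⌋₊ := by exact_mod_cast h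
      exact le_abs.mpr (Or.inl (by linarith))
    · have : (⌊c⌋₊ : ℝ) + 2 ≤ j.val := by exact_mod_cast h
      exact le_abs.mpr (Or.inr (by linarith))
  exact max_eq_left (by linarith)

lemma hat_sum (N : ℕ) (c : ℝ) (h0 : 0 ≤ c) (h1 : c ≤ N) :
    ∑ j : Fin (N + 1), max 0 (1 - |c - (j.val : ℝ)|) = 1 := by
  have hm_le : (⌊c⌋₊ : ℝ) ≤ c := Nat.floor_le h0
  have hm_lt : c < ⌊c⌋₊ + 1 := Nat.lt_floor_add_one c
  have hmN : ⌊c⌋₊ ≤ N := by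
    have : (⌊c⌋₊ : ℝ) ≤ (N : ℝ) := le_trans hm_le h1
    exact_mod_cast this
  by_cases hEq : ⌊c⌋₊ = N
  · -- then c = N
    have hcN : c = N := le_antisymm h1 (by rw [← hEq]; exact hm_le)
    rw [Finset.sum_eq_single (⟨N, by omega⟩ : Fin (N + 1))]
    · simp [hcN]
    · intro b _ hb
      refine hat_zero_of_far h0 b ?_ ?_
      · rw [hEq]; exact fun h => hb (Fin.ext h)
      · rw [hEq]; have := b.isLt; omega
    · simp
  · have hmN' : ⌊c⌋₊ < N := lt_of_le_of_ne hmN hEq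
    set m := ⌊c⌋₊ with hm
    set a : Fin (N + 1) := ⟨m, by omega⟩
    set b : Fin (N + 1) := ⟨m + 1, by omega⟩
    have hab : a ≠ b := by simp [a, b, Fin.ext_iff]
    have hsub : ∑ j : Fin (N + 1), max 0 (1 - |c - (j.val : ℝ)|)
        = ∑ j ∈ ({a, b} : Finset (Fin (N + 1))), max 0 (1 - |c - (j.val : ℝ)|) := by
      refine (Finset.sum_subset (Finset.subset_univ _) ?_).symm
      intro j _ hj
      simp only [Finset.mem_insert, Finset.mem_singleton] at hj
      push_neg at hj
      refine hat_zero_of_far h0 j ?_ ?_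
      · exact fun h => hj.1 (Fin.ext h)
      · exact fun h => hj.2 (Fin.ext h)
    rw [hsub, Finset.sum_pair hab]
    have ha : max 0 (1 - |c - (a.val : ℝ)|) = 1 - (c - m) := by
      have hav : (a.val : ℝ) = m := rfl
      rw [hav, abs_of_nonneg (by linarith)]
      exact max_eq_right (by linarith)
    have hbv : (b.val : ℝ) = m + 1 := by simp [b]
    have hbb : max 0 (1 - |c - (b.val : ℝ)|) = c - m := by
      rw [hbv, abs_of_nonpos (by linarith)]
      have : 1 - -(c - ((m : ℝ) + 1)) = c - m := by ring
      rw [this]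
      exact max_eq_right (by linarith)
    rw [ha, hbb]; ring

lemma hat_card (N : ℕ) (c : ℝ) (h0 : 0 ≤ c) :
    (Finset.univ.filter fun j : Fin (N + 1) =>
      max 0 (1 - |c - (j.val : ℝ)|) ≠ 0).card ≤ 2 := by
  have hm_le : (⌊c⌋₊ : ℝ) ≤ c := Nat.floor_le h0
  set m := ⌊c⌋₊ with hm
  set a : Fin (N + 1) := ⟨min m N, by omega⟩
  set b : Fin (N + 1) := ⟨min (m + 1) N, by omega⟩
  have hsub : (Finset.univ.filter fun j : Fin (N + 1) =>
      max 0 (1 - |c - (j.val : ℝ)|) ≠ 0) ⊆ {a, b} := by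
    intro j hj
    simp only [Finset.mem_filter] at hj
    have habs : |c - (j.val : ℝ)| < 1 := by
      by_contra h
      push_neg at h
      exact hj.2 (max_eq_left (by linarith))
    rw [abs_lt] at habs
    have hjm : j.val = m ∨ j.val = m + 1 := by
      by_cases hc : (j.val : ℝ) ≤ c
      · left
        have h1 : j.val ≤ m := Nat.le_floor hc
        have h2 : m ≤ j.val := by
          have : c < (j.val : ℝ) + 1 := by linarith
          have : (m : ℝ) < (j.val : ℝ) + 1 := lt_of_le_of_lt hm_le this
          exact_mod_cast Nat.lt_add_one_iff.mp (by exact_mod_cast this)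
        omega
      · right
        push_neg at hc
        have h1 : m < j.val := by
          have : (m : ℝ) < j.val := lt_of_le_of_lt hm_le hc
          exact_mod_cast this
        have h2 : j.val ≤ m + 1 := by
          have hfl : c < (m : ℝ) + 1 := Nat.lt_floor_add_one c
          have : (j.val : ℝ) < (m : ℝ) + 2 := by linarith
          have : j.val < m + 2 := by exact_mod_cast this
          omega
        omega
    have hjN : j.val ≤ N := by have := j.isLt; omega
    rcases hjm with h | h
    · have : j = a := Fin.ext (by simp [a, h]; omega)
      simp [this]
    · have : j = b := Fin.ext (by simp [b, h]; omega)
      simp [this]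
  calc (Finset.univ.filter fun j : Fin (N + 1) =>
        max 0 (1 - |c - (j.val : ℝ)|) ≠ 0).card
      ≤ ({a, b} : Finset (Fin (N + 1))).card := Finset.card_le_card hsub
    _ ≤ 2 := le_trans (Finset.card_insert_le _ _) (by simp)

/-- A dense convex subset `A` of a convex set `B` in a metrizable real topological vector
space is `n`-dense in `B` for every `n`: every continuous map `f : [0,1]ⁿ → B` can be
uniformly approximated by continuous maps into `A`. -/
theorem dense_convex_subset_n_dense {X : Type*} [AddCommGroup X] [Module ℝ X]
    [TopologicalSpace X] [IsTopologicalAddGroup X] [ContinuousSMul ℝ X]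
    [TopologicalSpace.MetrizableSpace X]
    {A B : Set X} (hAB : A ⊆ B) (hA : Convex ℝ A) (hB : Convex ℝ B)
    (hdense : B ⊆ closure A) :
    ∀ (n : ℕ) (f : C(Fin n → unitInterval, X)), Set.range f ⊆ B →
      ∀ U ∈ nhds (0 : X), ∃ g : C(Fin n → unitInterval, X),
        Set.range g ⊆ A ∧ ∀ z, g z - f z ∈ U := by
  intro n f hfB U hU
  obtain ⟨W₁, hW₁, hW₁sum⟩ := sum_mem_of_small (2 ^ n) U hU
  obtain ⟨Wb, ⟨hWb, hWbbal⟩, hWbsub⟩ := (nhds_basis_balanced ℝ X).mem_iff.mp hW₁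
  obtain ⟨V, hV, hVadd⟩ := exists_nhds_zero_half hWb
  -- uniform continuity of f
  letI uX : UniformSpace X := IsTopologicalAddGroup.rightUniformSpace X
  haveI : IsUniformAddGroup X := isUniformAddGroup_of_addCommGroup
  have hfu : UniformContinuous (f : (Fin n → unitInterval) → X) :=
    CompactSpace.uniformContinuous_of_continuous f.continuous
  have hVX : {p : X × X | p.2 - p.1 ∈ V} ∈ 𝓤 X := by
    rw [uniformity_eq_comap_nhds_zero]
    exact preimage_mem_comap hV
  have hent : {p : (Fin n → unitInterval) × (Fin n → unitInterval) |
      f p.2 - f p.1 ∈ V} ∈ 𝓤 (Fin n → unitInterval) := hfu hVX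
  obtain ⟨δ, hδ, hδent⟩ := Metric.mem_uniformity_dist.mp hent
  obtain ⟨N', hNδ'⟩ := exists_nat_one_div_lt hδ
  set N : ℕ := N' + 1 with hN
  have hN0 : (0 : ℝ) < N := by positivity
  have hNδ : 1 / (N : ℝ) < δ := by exact_mod_cast hNδ'
  -- grid points
  have hmem : ∀ j : Fin (N + 1), ((j.val : ℝ) / N) ∈ unitInterval := by
    intro j
    constructor
    · positivity
    · rw [div_le_one hN0]
      have := j.isLt
      exact_mod_cast Nat.lt_add_one_iff.mp this
  set c : (Fin n → Fin (N + 1)) → (Fin n → unitInterval) :=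
    fun J k => ⟨(J k).val / N, hmem _⟩ with hc
  -- approximating points in A
  have haJ : ∀ J : Fin n → Fin (N + 1), ∃ x ∈ A, x - f (c J) ∈ V := by
    intro J
    have h1 : f (c J) ∈ closure A := hdense (hfB (Set.mem_range_self _))
    have h2 : {x : X | x - f (c J) ∈ V} ∈ 𝓝 (f (c J)) := by
      have hcont : Continuous fun x : X => x - f (c J) := by fun_prop
      have := hcont.continuousAt (x := f (c J))
      have h3 := this.preimage_mem_nhds (by simpa using hV)
      exact h3
    obtain ⟨x, hx, hxA⟩ := mem_closure_iff_nhds.mp h1 _ h2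
    exact ⟨x, hxA, hx⟩
  choose a haA haV using haJ
  -- partition of unity
  set φ : Fin (N + 1) → unitInterval → ℝ :=
    fun j t => max 0 (1 - |(N : ℝ) * (t : ℝ) - (j.val : ℝ)|) with hφ
  have hφcont : ∀ j, Continuous (φ j) := by
    intro j
    apply continuous_const.max
    fun_prop
  have hφ0 : ∀ j t, 0 ≤ φ j t := fun j t => le_max_left _ _
  have hφ1 : ∀ j t, φ j t ≤ 1 := by
    intro j t
    apply max_le (by norm_num)
    have := abs_nonneg ((N : ℝ) * (t : ℝ) - (j.val : ℝ))
    linarith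
  have hct : ∀ t : unitInterval, 0 ≤ (N : ℝ) * (t : ℝ) := fun t => by
    have := t.2.1; positivity
  have hct' : ∀ t : unitInterval, (N : ℝ) * (t : ℝ) ≤ N := fun t => by
    have h1 := t.2.2
    nlinarith
  have hφsum : ∀ t : unitInterval, ∑ j : Fin (N + 1), φ j t = 1 := by
    intro t
    simpa [hφ, abs_sub_comm] using hat_sum N ((N : ℝ) * (t : ℝ)) (hct t) (hct' t)
  set ρ : (Fin n → Fin (N + 1)) → (Fin n → unitInterval) → ℝ :=
    fun J z => ∏ k, φ (J k) (z k) with hρ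
  have hρcont : ∀ J, Continuous (ρ J) := by
    intro J
    apply continuous_finset_prod
    intro k _
    exact (hφcont (J k)).comp (continuous_apply k)
  have hρ0 : ∀ J z, 0 ≤ ρ J z := fun J z => Finset.prod_nonneg fun k _ => hφ0 _ _
  have hρ1 : ∀ J z, ρ J z ≤ 1 := fun J z =>
    Finset.prod_le_one (fun k _ => hφ0 _ _) (fun k _ => hφ1 _ _)
  have hρsum : ∀ z, ∑ J : Fin n → Fin (N + 1), ρ J z = 1 := by
    intro z
    have := Finset.prod_univ_sum (fun _ : Fin n => (Finset.univ : Finset (Fin (N + 1))))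
      (fun k j => φ j (z k))
    rw [Fintype.piFinset_univ] at this
    rw [hρ]
    simp only at this ⊢
    rw [← this]
    simp [hφsum]
  -- the approximating map
  refine ⟨⟨fun z => ∑ J : Fin n → Fin (N + 1), ρ J z • a J, ?_⟩, ?_, ?_⟩
  · apply continuous_finset_sum
    intro J _
    exact (hρcont J).smul continuous_const
  · rintro x ⟨z, rfl⟩
    exact hA.sum_mem (fun J _ => hρ0 J z) (hρsum z) (fun J _ => haA J)
  · intro z
    simp only [ContinuousMap.coe_mk]
    have hfz : (f z : X) = ∑ J : Fin n → Fin (N + 1), ρ J z • f z := by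
      rw [← Finset.sum_smul, hρsum z, one_smul]
    have hdiff : ∑ J : Fin n → Fin (N + 1), ρ J z • a J - f z
        = ∑ J : Fin n → Fin (N + 1), ρ J z • (a J - f z) := by
      calc ∑ J : Fin n → Fin (N + 1), ρ J z • a J - f z
          = ∑ J : Fin n → Fin (N + 1), ρ J z • a J
            - ∑ J : Fin n → Fin (N + 1), ρ J z • f z := by
            rw [← Finset.sum_smul, hρsum z, one_smul]
        _ = ∑ J : Fin n → Fin (N + 1), (ρ J z • a J - ρ J z • f z) :=
            (Finset.sum_sub_distrib _ _).symm
        _ = ∑ J : Fin n → Fin (N + 1), ρ J z • (a J - f z) := by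
            simp [smul_sub]
    rw [hdiff]
    set Sz : Finset (Fin n → Fin (N + 1)) :=
      Finset.univ.filter fun J => ρ J z ≠ 0 with hSz
    have hfilter : ∑ J ∈ Sz, ρ J z • (a J - f z)
        = ∑ J : Fin n → Fin (N + 1), ρ J z • (a J - f z) := by
      apply Finset.sum_filter_of_ne
      intro J _ hJ h0
      exact hJ (by rw [h0, zero_smul])
    rw [← hfilter]
    -- support of each coordinate
    have hmemS : ∀ J ∈ Sz, ∀ k, φ (J k) (z k) ≠ 0 := by
      intro J hJ k h0
      exact (Finset.mem_filter.mp hJ).2 (Finset.prod_eq_zero (Finset.mem_univ k) h0)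
    -- cardinality bound
    have hcard : Sz.card ≤ 2 ^ n := by
      have hsub : Sz ⊆ Fintype.piFinset
          (fun k => Finset.univ.filter fun j : Fin (N + 1) => φ j (z k) ≠ 0) := by
        intro J hJ
        rw [Fintype.mem_piFinset]
        intro k
        exact Finset.mem_filter.mpr ⟨Finset.mem_univ _, hmemS J hJ k⟩
      calc Sz.card ≤ _ := Finset.card_le_card hsub
        _ = ∏ k : Fin n, (Finset.univ.filter
              fun j : Fin (N + 1) => φ j (z k) ≠ 0).card := Fintype.card_piFinset _
        _ ≤ ∏ _k : Fin n, 2 := by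
            apply Finset.prod_le_prod'
            intro k _
            have := hat_card N ((N : ℝ) * (z k : ℝ)) (hct (z k))
            simpa [hφ, abs_sub_comm] using this
        _ = 2 ^ n := by simp
    -- each term is in Wb ⊆ W₁
    apply hW₁sum Sz _ hcard
    intro J hJ
    apply hWbsub
    have hnear : ∀ k, |(N : ℝ) * (z k : ℝ) - ((J k).val : ℝ)| < 1 := by
      intro k
      by_contra h
      push_neg at h
      exact hmemS J hJ k (max_eq_left (by linarith))
    have hdist : dist z (c J) < δ := by
      rw [dist_pi_lt_iff hδ]
      intro k
      rw [Subtype.dist_eq, Real.dist_eq]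
      have h1 : |(z k : ℝ) - ((J k).val : ℝ) / N| < 1 / N := by
        have key : (z k : ℝ) - ((J k).val : ℝ) / N
            = ((N : ℝ) * (z k : ℝ) - ((J k).val : ℝ)) / N := by
          field_simp
        rw [key, abs_div, abs_of_pos hN0]
        gcongr
        exact hnear k
      linarith
    have hfV : f (c J) - f z ∈ V := hδent hdist
    have hsum : a J - f z ∈ Wb := by
      have : a J - f z = (a J - f (c J)) + (f (c J) - f z) := by abel
      rw [this]
      exact hVadd _ (haV J) _ hfV
    have : ‖ρ J z‖ ≤ 1 := by
      rw [Real.norm_eq_abs, abs_of_nonneg (hρ0 J z)]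
      exact hρ1 J z
    exact hWbbal.smul_mem this hsum
end

section
/- Every nonempty Polish convex subset A of a metrizable topological vector space X over ℝ contains a translate c + K of a compact convex symmetric set K = −K such that the closure of the linear span ℝ·K contains A − A. -/
set_option maxHeartbeats 1000000

open Pointwise Filter Set Topology

/-- Sum of a geometric-type coefficient bound. -/
lemma my_sum_le_one (c : ℕ → ℝ) (hc1 : ∀ i, c i ≤ (2:ℝ)⁻¹ ^ (i+1)) (n : ℕ) :
    ∑ i ∈ Finset.range n, c i ≤ 1 := by
  calc ∑ i ∈ Finset.range n, c i ≤ ∑ i ∈ Finset.range n, (2:ℝ)⁻¹ ^ (i+1) :=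
        Finset.sum_le_sum fun i _ => hc1 i
    _ = (2:ℝ)⁻¹ * ∑ i ∈ Finset.range n, (2:ℝ)⁻¹ ^ i := by
        rw [Finset.mul_sum]; exact Finset.sum_congr rfl fun i _ => by ring
    _ ≤ (2:ℝ)⁻¹ * 2 := by
        have := sum_geometric_two_le n
        simp only [one_div] at this
        nlinarith
    _ = 1 := by norm_num

/-- Convex combination membership for the basic sums in the construction. -/
lemma my_convex_mem {X : Type*} [AddCommGroup X] [Module ℝ X] {A : Set X}
    (hA : Convex ℝ A) (a : ℕ → X) (ha : ∀ i, a i ∈ A) (c : ℕ → ℝ)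
    (hc0 : ∀ i, 0 ≤ c i) (hc1 : ∀ i, c i ≤ (2:ℝ)⁻¹ ^ (i+1)) (n : ℕ) :
    a 0 + ∑ i ∈ Finset.range n, c i • (a i - a 0) ∈ A := by
  set s : ℝ := ∑ i ∈ Finset.range n, c i with hs
  have hsle : s ≤ 1 := my_sum_le_one c hc1 n
  have e1 : ∑ i ∈ Finset.range n,
        ((if i = n then 1 - s else c i) • if i = n then a 0 else a i)
      = ∑ i ∈ Finset.range n, c i • a i :=
    Finset.sum_congr rfl fun i hi => by
      have h : i ≠ n := (Finset.mem_range.mp hi).ne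
      simp [h]
  have e2 : ∑ i ∈ Finset.range n, (if i = n then 1 - s else c i)
      = ∑ i ∈ Finset.range n, c i :=
    Finset.sum_congr rfl fun i hi => by
      have h : i ≠ n := (Finset.mem_range.mp hi).ne
      simp [h]
  have key : a 0 + ∑ i ∈ Finset.range n, c i • (a i - a 0)
      = ∑ i ∈ Finset.range (n+1),
          ((if i = n then 1 - s else c i) • if i = n then a 0 else a i) := by
    have h3 : ∑ i ∈ Finset.range n, c i • (a i - a 0)
        = (∑ i ∈ Finset.range n, c i • a i) - s • a 0 := by
      simp only [smul_sub, Finset.sum_sub_distrib, hs, Finset.sum_smul]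
    rw [Finset.sum_range_succ, e1, h3, if_pos rfl, if_pos rfl, sub_smul, one_smul]
    abel
  rw [key]
  refine hA.sum_mem (fun i _ => ?_) ?_ (fun i _ => ?_)
  · by_cases h : i = n
    · simp [h]; linarith
    · simp [h, hc0 i]
  · rw [Finset.sum_range_succ, e2, if_pos rfl]
    simp [hs]
  · by_cases h : i = n <;> simp [h, ha]

/-- Heine–Cantor based uniform smallness for a continuous map on the cube times a segment. -/
lemma my_unif {Y : Type*} [MetricSpace Y] {n : ℕ} {M r : ℝ} (hM : 0 < M) (hr : 0 < r)
    (Φ : (Fin n → Set.Icc (0:ℝ) 2) × Set.Icc (0:ℝ) M → Y) (hΦ : Continuous Φ) :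
    ∃ δ : ℝ, 0 < δ ∧ δ ≤ M ∧ ∀ p : (Fin n → Set.Icc (0:ℝ) 2) × Set.Icc (0:ℝ) M,
      (p.2 : ℝ) ≤ δ → dist (Φ p) (Φ (p.1, ⟨0, le_refl 0, hM.le⟩)) ≤ r := by
  haveI : CompactSpace (Set.Icc (0:ℝ) 2) := isCompact_iff_compactSpace.mp isCompact_Icc
  haveI : CompactSpace (Set.Icc (0:ℝ) M) := isCompact_iff_compactSpace.mp isCompact_Icc
  have hu := CompactSpace.uniformContinuous_of_continuous hΦ
  rcases Metric.uniformContinuous_iff.mp hu r hr with ⟨δ₀, hδ₀, hδ⟩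
  refine ⟨min M (δ₀/2), lt_min hM (by linarith), min_le_left _ _, fun p hp => ?_⟩
  have h0 : (0:ℝ) ≤ (p.2 : ℝ) := p.2.2.1
  have hdist : dist p (p.1, (⟨0, le_refl 0, hM.le⟩ : Set.Icc (0:ℝ) M)) < δ₀ := by
    rw [Prod.dist_eq]
    simp only [dist_self]
    rw [Subtype.dist_eq, Real.dist_eq]
    have habs : |(p.2 : ℝ) - 0| = (p.2 : ℝ) := by rw [sub_zero, abs_of_nonneg h0]
    rw [habs]
    have := min_le_right M (δ₀/2)
    simp only [max_lt_iff]
    constructor <;> linarith [hp]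
  exact (hδ hdist).le

/-- The partial sums used throughout the construction. -/
def myGs {X : Type*} [AddCommGroup X] [Module ℝ X] (b : ℕ → X) (l t : ℕ → ℝ) (n : ℕ) : X :=
  ∑ i ∈ Finset.range n, (t i * l i) • b i

lemma myGs_succ {X : Type*} [AddCommGroup X] [Module ℝ X] (b : ℕ → X) (l t : ℕ → ℝ) (n : ℕ) :
    myGs b l t (n+1) = myGs b l t n + (t n * l n) • b n :=
  Finset.sum_range_succ _ n

lemma myGs_prefix {X : Type*} [AddCommGroup X] [Module ℝ X] (b : ℕ → X) {l l' t : ℕ → ℝ} {n : ℕ}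
    (h : ∀ i < n, l i = l' i) : myGs b l t n = myGs b l' t n :=
  Finset.sum_congr rfl fun i hi => by rw [h i (Finset.mem_range.mp hi)]

lemma myGs_lin {X : Type*} [AddCommGroup X] [Module ℝ X] (b : ℕ → X) (l : ℕ → ℝ)
    (p q : ℝ) (t t' t'' : ℕ → ℝ) (h : ∀ i, p * t i + q * t' i = t'' i) (n : ℕ) :
    p • myGs b l t n + q • myGs b l t' n = myGs b l t'' n := by
  unfold myGs
  rw [Finset.smul_sum, Finset.smul_sum, ← Finset.sum_add_distrib]
  refine Finset.sum_congr rfl fun i _ => ?_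
  rw [smul_smul, smul_smul, ← add_smul]
  congr 1
  rw [← h i]; ring

/-- Every nonempty Polish convex subset `A` of a metrizable real topological vector space
contains a translate `c + K` of a compact convex symmetric set `K = -K` such that the
closure of the linear span of `K` contains `A - A`. -/
theorem polish_convex_contains_translate_of_compact_symmetric {X : Type*}
    [AddCommGroup X] [Module ℝ X] [TopologicalSpace X] [IsTopologicalAddGroup X]
    [ContinuousSMul ℝ X] [TopologicalSpace.MetrizableSpace X]
    {A : Set X} (hA : Convex ℝ A) (hne : A.Nonempty) (hPolish : PolishSpace A) :
    ∃ (c : X) (K : Set X), IsCompact K ∧ Convex ℝ K ∧ -K = K ∧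
      (fun x => c + x) '' K ⊆ A ∧ A - A ⊆ closure (Submodule.span ℝ K : Set X) := by
  haveI := hPolish
  letI := TopologicalSpace.upgradeIsCompletelyMetrizable ↥A
  haveI : Nonempty ↥A := hne.to_subtype
  obtain ⟨a, ha⟩ := TopologicalSpace.exists_dense_seq ↥A
  set va : ℕ → X := fun i => (a i : X) with hva
  set b : ℕ → X := fun i => va i - va 0 with hb
  set ee : ℕ → ℝ := fun i => (2:ℝ)⁻¹ ^ (i+2) with hee
  have hee0 : ∀ i, 0 < ee i := fun i => by positivity
  -- membership of partial sums
  have hmem : ∀ (l t : ℕ → ℝ), (∀ i, 0 ≤ t i * l i) → (∀ i, t i * l i ≤ (2:ℝ)⁻¹^(i+1)) →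
      ∀ n, va 0 + myGs b l t n ∈ A := by
    intro l t h0 h1 n
    have := my_convex_mem hA va (fun i => (a i).2) (fun i => t i * l i) h0 h1 n
    simpa [myGs, hb] using this
  have hcoef : ∀ (l t : ℕ → ℝ), (∀ i, 0 < l i) → (∀ i, l i ≤ ee i) →
      (∀ i, t i ∈ Set.Icc (0:ℝ) 2) →
      (∀ i, 0 ≤ t i * l i) ∧ (∀ i, t i * l i ≤ (2:ℝ)⁻¹^(i+1)) := by
    intro l t h0 h1 ht
    refine ⟨fun i => mul_nonneg (ht i).1 (h0 i).le, fun i => ?_⟩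
    have h2 : t i * l i ≤ 2 * ee i := by nlinarith [(ht i).1, (ht i).2, h1 i, (h0 i).le]
    have h3 : 2 * ee i = (2:ℝ)⁻¹^(i+1) := by
      simp only [hee]
      rw [pow_succ]
      ring
    linarith
  -- the key analytic step: choosing the next λ
  have step2 : ∀ (l : ℕ → ℝ), (∀ i, 0 < l i) → (∀ i, l i ≤ ee i) → ∀ n : ℕ,
      ∃ x : ℝ, 0 < x ∧ x ≤ ee n ∧
        ∀ (t : ℕ → ℝ), (∀ i, t i ∈ Set.Icc (0:ℝ) 2) →
          ∀ (h1 : va 0 + myGs b (Function.update l n x) t n ∈ A)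
            (h2 : va 0 + myGs b (Function.update l n x) t (n+1) ∈ A),
          dist (⟨va 0 + myGs b (Function.update l n x) t n, h1⟩ : ↥A)
               (⟨va 0 + myGs b (Function.update l n x) t (n+1), h2⟩ : ↥A) ≤ (2:ℝ)⁻¹ ^ n := by
    intro l hl0 hl1 n
    set M : ℝ := (2:ℝ)⁻¹ ^ (n+1) with hM
    have hM0 : 0 < M := by positivity
    set T : (Fin n → Set.Icc (0:ℝ) 2) → ℕ → ℝ :=
      fun ts i => if h : i < n then (ts ⟨i, h⟩ : ℝ) else 0 with hT
    have hT0 : ∀ ts i, 0 ≤ T ts i := by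
      intro ts i; simp only [hT]
      split
      · exact (ts _).2.1
      · exact le_refl 0
    have hT2 : ∀ ts i, T ts i ≤ 2 := by
      intro ts i; simp only [hT]
      split
      · exact (ts _).2.2
      · norm_num
    have hΦmem : ∀ (ts : (Fin n → Set.Icc (0:ℝ) 2) × Set.Icc (0:ℝ) M),
        va 0 + (myGs b l (T ts.1) n + (ts.2 : ℝ) • b n) ∈ A := by
      intro ts
      set cc : ℕ → ℝ := fun i => if i = n then (ts.2 : ℝ) else T ts.1 i * l i with hcc
      have h0 : ∀ i, 0 ≤ cc i := by
        intro i; simp only [hcc]; split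
        · exact ts.2.2.1
        · exact mul_nonneg (hT0 _ i) (hl0 i).le
      have h1 : ∀ i, cc i ≤ (2:ℝ)⁻¹^(i+1) := by
        intro i; simp only [hcc]; split
        · rename_i hi; subst hi
          have := ts.2.2.2
          simp only [hM] at this
          linarith
        · have hmul : T ts.1 i * l i ≤ 2 * ee i := by
            nlinarith [hT0 ts.1 i, hT2 ts.1 i, hl1 i, (hl0 i).le, hee0 i]
          have h3 : 2 * ee i = (2:ℝ)⁻¹^(i+1) := by
            simp only [hee]; rw [pow_succ]; ring
          linarith
      have hmm := my_convex_mem hA va (fun i => (a i).2) cc h0 h1 (n+1)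
      rw [Finset.sum_range_succ] at hmm
      have e0 : ∑ i ∈ Finset.range n, cc i • (va i - va 0) = myGs b l (T ts.1) n := by
        unfold myGs
        refine Finset.sum_congr rfl fun i hi => ?_
        have h : i ≠ n := (Finset.mem_range.mp hi).ne
        simp [hcc, h, hb]
      rw [e0] at hmm
      simp only [hcc, if_pos rfl] at hmm
      simpa [hb] using hmm
    have hcont : Continuous (fun ts : (Fin n → Set.Icc (0:ℝ) 2) × Set.Icc (0:ℝ) M =>
        (⟨va 0 + (myGs b l (T ts.1) n + (ts.2 : ℝ) • b n), hΦmem ts⟩ : ↥A)) := by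
      apply Continuous.subtype_mk
      refine continuous_const.add (Continuous.add ?_ ?_)
      · have e : ∀ ts : (Fin n → Set.Icc (0:ℝ) 2) × Set.Icc (0:ℝ) M,
            (∑ i : Fin n, ((ts.1 i : ℝ) * l i) • b i) = myGs b l (T ts.1) n := by
          intro ts
          rw [show myGs b l (T ts.1) n = ∑ i ∈ Finset.range n, (T ts.1 i * l i) • b i from rfl,
            ← Fin.sum_univ_eq_sum_range (fun i => (T ts.1 i * l i) • b i) n]
          refine Finset.sum_congr rfl fun i _ => ?_
          simp [hT, i.isLt]
        apply Continuous.congr ?_ e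
        exact continuous_finset_sum _ fun i _ =>
          ((continuous_subtype_val.comp ((continuous_apply i).comp continuous_fst)).mul
            continuous_const).smul continuous_const
      · exact (continuous_subtype_val.comp continuous_snd).smul continuous_const
    obtain ⟨δ, hδ0, hδM, hδ⟩ := my_unif (Y := ↥A) hM0
      (by positivity : (0:ℝ) < (2:ℝ)⁻¹^n) _ hcont
    have hMee : M = 2 * ee n := by
      simp only [hM, hee]; rw [pow_succ]; ring
    refine ⟨δ/2, by linarith, by linarith, ?_⟩
    intro t ht h1 h2
    set ts : Fin n → Set.Icc (0:ℝ) 2 := fun i => ⟨t i, ht i⟩ with hts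
    have hE1 : myGs b (Function.update l n (δ/2)) t n = myGs b l (T ts) n := by
      refine Finset.sum_congr rfl fun i hi => ?_
      have h : i < n := Finset.mem_range.mp hi
      rw [Function.update_of_ne h.ne]
      simp [hT, h, hts]
    have hE2 : myGs b (Function.update l n (δ/2)) t (n+1)
        = myGs b l (T ts) n + (t n * (δ/2)) • b n := by
      rw [myGs_succ, hE1, Function.update_self]
    have hs1mem : t n * (δ/2) ∈ Set.Icc (0:ℝ) M := by
      constructor
      · exact mul_nonneg (ht n).1 (by linarith)
      · nlinarith [(ht n).2, (ht n).1]
    have h0mem : (0:ℝ) ∈ Set.Icc (0:ℝ) M := ⟨le_refl 0, hM0.le⟩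
    have hd := hδ (ts, ⟨t n * (δ/2), hs1mem⟩) (by
      show t n * (δ/2) ≤ δ
      nlinarith [(ht n).2, (ht n).1])
    rw [dist_comm] at hd
    convert hd using 3
    · simp [hE1]
    · simp [hE2]
  -- build the sequence lam by recursion
  have step3 : ∀ (p : {l : ℕ → ℝ // (∀ i, 0 < l i) ∧ (∀ i, l i ≤ ee i)}) (n : ℕ),
      ∃ q : {l : ℕ → ℝ // (∀ i, 0 < l i) ∧ (∀ i, l i ≤ ee i)},
        (∀ i, i ≠ n → q.1 i = p.1 i) ∧
        ∀ (t : ℕ → ℝ), (∀ i, t i ∈ Set.Icc (0:ℝ) 2) →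
          ∀ (h1 : va 0 + myGs b q.1 t n ∈ A) (h2 : va 0 + myGs b q.1 t (n+1) ∈ A),
          dist (⟨va 0 + myGs b q.1 t n, h1⟩ : ↥A)
               (⟨va 0 + myGs b q.1 t (n+1), h2⟩ : ↥A) ≤ (2:ℝ)⁻¹ ^ n := by
    intro p n
    obtain ⟨x, hx0, hxe, hcnd⟩ := step2 p.1 p.2.1 p.2.2 n
    refine ⟨⟨Function.update p.1 n x, ?_, ?_⟩, fun i hi => Function.update_of_ne hi _ _, hcnd⟩
    · intro i
      rcases eq_or_ne i n with h | h
      · subst h; rw [Function.update_self]; exact hx0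
      · rw [Function.update_of_ne h]; exact p.2.1 i
    · intro i
      rcases eq_or_ne i n with h | h
      · subst h; rw [Function.update_self]; exact hxe
      · rw [Function.update_of_ne h]; exact p.2.2 i
  choose nxt hn1 hn2 using step3
  let base : {l : ℕ → ℝ // (∀ i, 0 < l i) ∧ (∀ i, l i ≤ ee i)} := ⟨ee, hee0, fun i => le_refl _⟩
  let g : ℕ → {l : ℕ → ℝ // (∀ i, 0 < l i) ∧ (∀ i, l i ≤ ee i)} :=
    fun n => Nat.rec base (fun k ih => nxt ih k) n
  have hg : ∀ n, g (n+1) = nxt (g n) n := fun n => rfl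
  set lam : ℕ → ℝ := fun n => (g (n+1)).1 n with hlam
  have hag : ∀ m n, n < m → (g m).1 n = lam n := by
    intro m
    induction m with
    | zero => intro n h; exact absurd h (Nat.not_lt_zero n)
    | succ k ih =>
      intro n h
      rcases Nat.lt_succ_iff_lt_or_eq.mp h with h' | h'
      · rw [hg k, hn1 (g k) k n (by omega)]
        exact ih n h'
      · subst h'; rfl
  have hlam0 : ∀ n, 0 < lam n := fun n => (g (n+1)).2.1 n
  have hlamE : ∀ n, lam n ≤ ee n := fun n => (g (n+1)).2.2 n
  have hCnd : ∀ (n : ℕ) (t : ℕ → ℝ), (∀ i, t i ∈ Set.Icc (0:ℝ) 2) →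
      ∀ (h1 : va 0 + myGs b lam t n ∈ A) (h2 : va 0 + myGs b lam t (n+1) ∈ A),
      dist (⟨va 0 + myGs b lam t n, h1⟩ : ↥A)
           (⟨va 0 + myGs b lam t (n+1), h2⟩ : ↥A) ≤ (2:ℝ)⁻¹ ^ n := by
    intro n t ht h1 h2
    have h := hn2 (g n) n t ht
    have e : ∀ k, k ≤ n + 1 → myGs b (nxt (g n) n).1 t k = myGs b lam t k := by
      intro k hk
      refine Finset.sum_congr rfl fun i hi => ?_
      have hik : i < k := Finset.mem_range.mp hi
      rw [← hg n, hag (n+1) i (by omega)]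
    have h1' : va 0 + myGs b (nxt (g n) n).1 t n ∈ A := by rw [e n (by omega)]; exact h1
    have h2' : va 0 + myGs b (nxt (g n) n).1 t (n+1) ∈ A := by rw [e (n+1) (by omega)]; exact h2
    have := h h1' h2'
    convert this using 3
    · rw [e n (by omega)]
    · rw [e (n+1) (by omega)]
  -- membership for lam-sums
  have hmem' : ∀ (t : ℕ → ℝ), (∀ i, t i ∈ Set.Icc (0:ℝ) 2) →
      ∀ n, va 0 + myGs b lam t n ∈ A := by
    intro t ht n
    obtain ⟨hc0, hc1⟩ := hcoef lam t hlam0 hlamE ht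
    exact hmem lam t hc0 hc1 n
  -- convergence of the partial sums in A
  have hconv : ∀ (t : ℕ → ℝ) (ht : ∀ i, t i ∈ Set.Icc (0:ℝ) 2),
      ∃ L : ↥A, Tendsto (fun n => (⟨va 0 + myGs b lam t n, hmem' t ht n⟩ : ↥A))
        atTop (𝓝 L) := by
    intro t ht
    apply cauchySeq_tendsto_of_complete
    apply cauchySeq_of_le_geometric_two (C := 2)
    intro n
    have := hCnd n t ht (hmem' t ht n) (hmem' t ht (n+1))
    calc dist (⟨va 0 + myGs b lam t n, hmem' t ht n⟩ : ↥A)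
          ⟨va 0 + myGs b lam t (n+1), hmem' t ht (n+1)⟩ ≤ (2:ℝ)⁻¹ ^ n := this
      _ = 2 / 2 / 2^n := by rw [inv_pow]; norm_num
  choose L hL using hconv
  have hbound : ∀ (t : ℕ → ℝ) (ht : ∀ i, t i ∈ Set.Icc (0:ℝ) 2) (n : ℕ),
      dist (⟨va 0 + myGs b lam t n, hmem' t ht n⟩ : ↥A) (L t ht) ≤ 2 / 2^n := by
    intro t ht n
    refine dist_le_of_le_geometric_two_of_tendsto (C := 2) ?_ (hL t ht) n
    intro m
    have := hCnd m t ht (hmem' t ht m) (hmem' t ht (m+1))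
    calc dist (⟨va 0 + myGs b lam t m, hmem' t ht m⟩ : ↥A)
          ⟨va 0 + myGs b lam t (m+1), hmem' t ht (m+1)⟩ ≤ (2:ℝ)⁻¹ ^ m := this
      _ = 2 / 2 / 2^m := by rw [inv_pow]; norm_num
  -- the limit map on the infinite cube
  have hvt : ∀ t : ℕ → Set.Icc (0:ℝ) 2, ∀ i, ((t i : ℝ)) ∈ Set.Icc (0:ℝ) 2 := fun t i => (t i).2
  set Smap : (ℕ → Set.Icc (0:ℝ) 2) → ↥A := fun t => L (fun i => (t i : ℝ)) (hvt t) with hSmap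
  have hUc : ∀ n, Continuous (fun t : ℕ → Set.Icc (0:ℝ) 2 =>
      (⟨va 0 + myGs b lam (fun i => (t i : ℝ)) n, hmem' _ (hvt t) n⟩ : ↥A)) := by
    intro n
    apply Continuous.subtype_mk
    apply continuous_const.add
    unfold myGs
    exact continuous_finset_sum _ fun i _ =>
      ((continuous_subtype_val.comp (continuous_apply i)).mul continuous_const).smul
        continuous_const
  have hTU : TendstoUniformly (fun n t => (⟨va 0 + myGs b lam (fun i => (t i : ℝ)) n,
      hmem' _ (hvt t) n⟩ : ↥A)) Smap atTop := by
    rw [Metric.tendstoUniformly_iff]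
    intro ε hε
    have h2 : Tendsto (fun n : ℕ => 2 / 2^n : ℕ → ℝ) atTop (𝓝 0) := by
      have := tendsto_pow_atTop_nhds_zero_of_lt_one
        (by norm_num : (0:ℝ) ≤ 1/2) (by norm_num : (1:ℝ)/2 < 1)
      have h3 := this.const_mul (2:ℝ)
      simp only [mul_zero] at h3
      refine h3.congr fun n => ?_
      rw [div_pow]
      norm_num
      ring
    filter_upwards [h2.eventually_lt_const hε] with n hn t
    calc dist (Smap t) (⟨va 0 + myGs b lam (fun i => (t i : ℝ)) n, hmem' _ (hvt t) n⟩ : ↥A)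
        = dist (⟨va 0 + myGs b lam (fun i => (t i : ℝ)) n, hmem' _ (hvt t) n⟩ : ↥A) (Smap t) :=
          dist_comm _ _
      _ ≤ 2 / 2^n := hbound _ (hvt t) n
      _ < ε := hn
  have hSc : Continuous Smap := hTU.continuous (Eventually.of_forall hUc).frequently
  -- limits in X
  have hXlim : ∀ (t : ℕ → ℝ) (ht : ∀ i, t i ∈ Set.Icc (0:ℝ) 2),
      Tendsto (fun n => va 0 + myGs b lam t n) atTop (𝓝 ((L t ht : X))) := by
    intro t ht
    exact (continuous_subtype_val.tendsto (L t ht)).comp (hL t ht)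
  set one1 : ℕ → Set.Icc (0:ℝ) 2 := fun _ => ⟨1, by norm_num, by norm_num⟩ with hone
  set cX : X := ((Smap one1 : X)) with hcX
  set K : Set X := Set.range (fun t : ℕ → Set.Icc (0:ℝ) 2 => ((Smap t : X)) - cX) with hK
  -- the basic linear-combination identity for limits
  have hcomb : ∀ (p q : ℝ) (t t' t'' : ℕ → Set.Icc (0:ℝ) 2),
      (∀ i, p * (t i : ℝ) + q * (t' i : ℝ) = (t'' i : ℝ)) →
      p • ((Smap t : X) - va 0) + q • ((Smap t' : X) - va 0) = (Smap t'' : X) - va 0 := by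
    intro p q t t' t'' hptq
    have l1 := ((hXlim _ (hvt t)).sub_const (va 0)).const_smul p
    have l2 := ((hXlim _ (hvt t')).sub_const (va 0)).const_smul q
    have l3 := (hXlim _ (hvt t'')).sub_const (va 0)
    refine tendsto_nhds_unique ((l1.add l2).congr fun n => ?_) l3
    simp only [add_sub_cancel_left]
    exact myGs_lin b lam p q _ _ _ hptq n
  haveI : CompactSpace (Set.Icc (0:ℝ) 2) := isCompact_iff_compactSpace.mp isCompact_Icc
  refine ⟨cX, K, ?_, ?_, ?_, ?_, ?_⟩
  · -- compact
    exact isCompact_range ((continuous_subtype_val.comp hSc).sub continuous_const)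
  · -- convex
    rintro x ⟨t, rfl⟩ y ⟨t', rfl⟩ α β hα hβ hαβ
    have hmem2 : ∀ i, α * (t i : ℝ) + β * (t' i : ℝ) ∈ Set.Icc (0:ℝ) 2 := by
      intro i
      constructor
      · have := (t i).2.1; have := (t' i).2.1; positivity
      · nlinarith [(t i).2.2, (t' i).2.2, (t i).2.1, (t' i).2.1]
    set t'' : ℕ → Set.Icc (0:ℝ) 2 := fun i => ⟨α * (t i : ℝ) + β * (t' i : ℝ), hmem2 i⟩ with ht''
    have h := hcomb α β t t' t'' (fun i => rfl)
    refine ⟨t'', ?_⟩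
    show (Smap t'' : X) - cX = α • ((Smap t : X) - cX) + β • ((Smap t' : X) - cX)
    symm
    have e1 : ∀ z : X, α • (z - cX) = α • (z - va 0) + α • (va 0 - cX) := by
      intro z; rw [← smul_add]; congr 1; abel
    have e2 : ∀ z : X, β • (z - cX) = β • (z - va 0) + β • (va 0 - cX) := by
      intro z; rw [← smul_add]; congr 1; abel
    have e3 : α • (va 0 - cX) + β • (va 0 - cX) = va 0 - cX := by
      rw [← add_smul, hαβ, one_smul]
    calc α • ((Smap t : X) - cX) + β • ((Smap t' : X) - cX)
        = (α • ((Smap t : X) - va 0) + β • ((Smap t' : X) - va 0))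
            + (α • (va 0 - cX) + β • (va 0 - cX)) := by rw [e1, e2]; abel
      _ = ((Smap t'' : X) - va 0) + (va 0 - cX) := by rw [h, e3]
      _ = (Smap t'' : X) - cX := by abel
  · -- symmetric
    have htw : ∀ (t : ℕ → Set.Icc (0:ℝ) 2) (i : ℕ), 2 - (t i : ℝ) ∈ Set.Icc (0:ℝ) 2 := by
      intro t i
      constructor
      · have := (t i).2.2; linarith
      · have := (t i).2.1; linarith
    have htwo : ∀ i : ℕ, (2:ℝ) ∈ Set.Icc (0:ℝ) 2 := fun _ => ⟨by norm_num, le_refl _⟩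
    set two2 : ℕ → Set.Icc (0:ℝ) 2 := fun i => ⟨2, htwo i⟩ with htwo2
    have hswap : ∀ t : ℕ → Set.Icc (0:ℝ) 2,
        ((Smap (fun i => ⟨2 - (t i : ℝ), htw t i⟩) : X)) - cX = -(((Smap t : X)) - cX) := by
      intro t
      have h1 := hcomb 1 1 t (fun i => ⟨2 - (t i : ℝ), htw t i⟩) two2 (fun i => by
        show 1 * (t i : ℝ) + 1 * (2 - (t i : ℝ)) = 2; ring)
      have h2 := hcomb 2 0 one1 one1 two2 (fun i => by
        show 2 * (1:ℝ) + 0 * (1:ℝ) = 2; norm_num)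
      simp only [one_smul] at h1
      rw [zero_smul, add_zero] at h2
      have h4 : ((Smap t : X) - va 0) + ((Smap (fun i => ⟨2 - (t i : ℝ), htw t i⟩) : X) - va 0)
          = (cX - va 0) + (cX - va 0) := by
        rw [h1, ← h2, two_smul]
      have h6 : (Smap t : X) + (Smap (fun i => ⟨2 - (t i : ℝ), htw t i⟩) : X) = cX + cX := by
        have h5 : ((Smap t : X) + (Smap (fun i => ⟨2 - (t i : ℝ), htw t i⟩) : X)) - (va 0 + va 0)
            = (cX + cX) - (va 0 + va 0) := by
          calc ((Smap t : X) + (Smap (fun i => ⟨2 - (t i : ℝ), htw t i⟩) : X)) - (va 0 + va 0)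
              = ((Smap t : X) - va 0) + ((Smap (fun i => ⟨2 - (t i : ℝ), htw t i⟩) : X) - va 0) := by
                abel
            _ = (cX - va 0) + (cX - va 0) := h4
            _ = (cX + cX) - (va 0 + va 0) := by abel
        have := congrArg (fun z => z + (va 0 + va 0)) h5
        simpa [sub_add_cancel] using this
      rw [neg_sub]
      rw [sub_eq_sub_iff_add_eq_add]
      rw [add_comm]
      exact h6
    ext x
    simp only [Set.mem_neg, hK, Set.mem_range]
    constructor
    · rintro ⟨t, htx⟩
      exact ⟨fun i => ⟨2 - (t i : ℝ), htw t i⟩, by rw [hswap t, htx, neg_neg]⟩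
    · rintro ⟨t, rfl⟩
      exact ⟨fun i => ⟨2 - (t i : ℝ), htw t i⟩, by rw [hswap t]⟩
  · -- translate inside A
    rintro _ ⟨x, ⟨t, rfl⟩, rfl⟩
    show cX + ((Smap t : X) - cX) ∈ A
    have he : cX + ((Smap t : X) - cX) = (Smap t : X) := by abel
    rw [he]
    exact (Smap t).2
  · -- span density
    have hbK : ∀ n, lam n • b n ∈ K := by
      intro n
      have hen : ∀ i : ℕ, ((if i = n then (2:ℝ) else 1)) ∈ Set.Icc (0:ℝ) 2 := by
        intro i; split <;> constructor <;> norm_num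
      set en : ℕ → Set.Icc (0:ℝ) 2 := fun i => ⟨if i = n then (2:ℝ) else 1, hen i⟩ with hben
      refine ⟨en, ?_⟩
      have hev : ∀ m, n < m → va 0 + myGs b lam (fun i => ((en i : ℝ))) m
          = (va 0 + myGs b lam (fun i => ((one1 i : ℝ))) m) + lam n • b n := by
        intro m hm
        have hsum : myGs b lam (fun i => ((en i : ℝ))) m
            = myGs b lam (fun i => ((one1 i : ℝ))) m + lam n • b n := by
          unfold myGs
          have hterm : ∀ i, (((en i : ℝ)) * lam i) • b i
              = (((one1 i : ℝ)) * lam i) • b i + (if i = n then lam n • b n else 0) := by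
            intro i
            by_cases h : i = n
            · subst h
              simp [hben, hone]
              module
            · simp [hben, hone, h]
          rw [Finset.sum_congr rfl (fun i _ => hterm i), Finset.sum_add_distrib,
            Finset.sum_ite_eq' (Finset.range m) n (fun _ => lam n • b n),
            if_pos (Finset.mem_range.mpr hm)]
        rw [hsum, ← add_assoc]
      have t1 := hXlim _ (hvt en)
      have t2 := (hXlim _ (hvt one1)).add_const (lam n • b n)
      have hev' : (fun m => (va 0 + myGs b lam (fun i => ((one1 i : ℝ))) m) + lam n • b n)
          =ᶠ[atTop] (fun m => va 0 + myGs b lam (fun i => ((en i : ℝ))) m) := by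
        filter_upwards [eventually_gt_atTop n] with m hm
        exact (hev m hm).symm
      have heq := tendsto_nhds_unique (t2.congr' hev') t1
      show (Smap en : X) - cX = lam n • b n
      have heq2 : (Smap en : X) = cX + lam n • b n := by
        simp only [hSmap, hcX]
        exact heq.symm
      rw [heq2]
      abel
    have hbspan : ∀ n, b n ∈ Submodule.span ℝ K := by
      intro n
      have h1 : lam n • b n ∈ Submodule.span ℝ K := Submodule.subset_span (hbK n)
      have h2 := Submodule.smul_mem (Submodule.span ℝ K) (lam n)⁻¹ h1
      rwa [smul_smul, inv_mul_cancel₀ (hlam0 n).ne', one_smul] at h2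
    intro u hu
    rw [Set.mem_sub] at hu
    obtain ⟨x, hx, y, hy, rfl⟩ := hu
    set Msub := (Submodule.span ℝ K).topologicalClosure with hMsub
    have hMclosed : IsClosed (Msub : Set X) := Submodule.isClosed_topologicalClosure _
    have hMcoe : (Msub : Set X) = closure (Submodule.span ℝ K : Set X) :=
      (Submodule.span ℝ K).topologicalClosure_coe
    have hdense : ∀ z ∈ A, z ∈ closure (Set.range va) := by
      intro z hz
      have h1 : (⟨z, hz⟩ : ↥A) ∈ closure (Set.range a) := ha _
      have h2 := image_closure_subset_closure_image
        (f := (Subtype.val : ↥A → X)) continuous_subtype_val (s := Set.range a)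
      have h3 : z ∈ Subtype.val '' closure (Set.range a) := ⟨_, h1, rfl⟩
      have h4 := h2 h3
      rwa [← Set.range_comp] at h4
    have hbM : ∀ n, b n ∈ (Msub : Set X) := by
      intro n
      exact (Submodule.span ℝ K).le_topologicalClosure (hbspan n)
    have hstep : ∀ i, ∀ z ∈ A, va i - z ∈ (Msub : Set X) := by
      intro i z hz
      have h1 : z ∈ closure (Set.range va) := hdense z hz
      have h2 : va i - z ∈ (fun u => va i - u) '' closure (Set.range va) := ⟨z, h1, rfl⟩
      have h3 := image_closure_subset_closure_image
        (continuous_const.sub continuous_id) h2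
      have h4 : (fun u => va i - u) '' Set.range va ⊆ (Msub : Set X) := by
        rintro _ ⟨_, ⟨j, rfl⟩, rfl⟩
        show va i - va j ∈ (Msub : Set X)
        have hij : va i - va j = b i - b j := by simp only [hb]; abel
        rw [hij]
        exact sub_mem (hbM i) (hbM j)
      exact closure_minimal h4 hMclosed h3
    have hxy : x - y ∈ (Msub : Set X) := by
      have h1 : x ∈ closure (Set.range va) := hdense x hx
      have h2 : x - y ∈ (fun u => u - y) '' closure (Set.range va) := ⟨x, h1, rfl⟩
      have h3 := image_closure_subset_closure_image
        (continuous_id.sub continuous_const) h2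
      have h4 : (fun u => u - y) '' Set.range va ⊆ (Msub : Set X) := by
        rintro _ ⟨_, ⟨i, rfl⟩, rfl⟩
        exact hstep i y hy

      exact closure_minimal h4 hMclosed h3
    rw [← hMcoe]
    exact hxy
end
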